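/- arXiv:2008.01931 — 5 statements merged into one kernel-verified Lean document; each statement's English description precedes it below -/
import Mathlib

section
/- If X and Y are independent Rayleigh random variables with scale parameter 1, then the product A = XY has probability density f_A(x) = x ∫_0^∞ e^{−x cosh u} du for x > 0; that is, for every Borel set S ⊆ (0,∞), P(XY ∈ S) = ∫_S x (∫_0^∞ e^{−x cosh u} du) dx. -/
open Real MeasureTheory ProbabilityTheory Set

/-- A random variable `X` is Rayleigh distributed with scale parameter 1 if it is measurable
and its law has density `x ↦ x * exp (-x² / 2)` with respect to Lebesgue measure. -/
def IsRayleigh {Ω : Type*} [MeasurableSpace Ω] (μ : Measure Ω) (X : Ω → ℝ) : Prop :=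
  Measurable X ∧
    Measure.map X μ =
      MeasureTheory.volume.withDensity fun x => ENNReal.ofReal (x * Real.exp (-x ^ 2 / 2))

open scoped ENNReal

namespace DR

noncomputable def f (x : ℝ) : ℝ≥0∞ := ENNReal.ofReal (x * Real.exp (-x ^ 2 / 2))

lemma f_meas : Measurable f := by unfold f; fun_prop

lemma f_zero {x : ℝ} (hx : x ≤ 0) : f x = 0 := by
  unfold f
  exact ENNReal.ofReal_eq_zero.mpr (by nlinarith [Real.exp_pos (-x^2/2)])

/-- 1-D lintegral change of variables -/
lemma lintegral_image {s : Set ℝ} {φ φ' : ℝ → ℝ} (hs : MeasurableSet s)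
    (hφ' : ∀ x ∈ s, HasDerivWithinAt φ (φ' x) s x) (hφ : InjOn φ s) (g : ℝ → ℝ≥0∞) :
    ∫⁻ x in φ '' s, g x = ∫⁻ x in s, ENNReal.ofReal |φ' x| * g (φ x) := by
  simpa only [ContinuousLinearMap.det_toSpanSingleton] using
    lintegral_image_eq_lintegral_abs_det_fderiv_mul volume hs
      (fun x hx => (hφ' x hx).hasFDerivWithinAt) hφ g

noncomputable def K (a : ℝ) : ℝ≥0∞ :=
  ∫⁻ u in Ioi (0:ℝ), ENNReal.ofReal (Real.exp (-(a * Real.cosh u)))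

lemma K_integrand_meas (a : ℝ) :
    Measurable fun u : ℝ => ENNReal.ofReal (Real.exp (-(a * Real.cosh u))) := by fun_prop

lemma lintegral_cosh_real (a : ℝ) :
    ∫⁻ u : ℝ, ENNReal.ofReal (Real.exp (-(a * Real.cosh u))) = 2 * K a := by
  have h1 : ∫⁻ u : ℝ, ENNReal.ofReal (Real.exp (-(a * Real.cosh u)))
      = (∫⁻ u in Ici (0:ℝ), ENNReal.ofReal (Real.exp (-(a * Real.cosh u))))
        + ∫⁻ u in Iio (0:ℝ), ENNReal.ofReal (Real.exp (-(a * Real.cosh u))) := by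
    rw [← lintegral_add_compl _ measurableSet_Ici, compl_Ici]
  have h2 : ∫⁻ u in Ici (0:ℝ), ENNReal.ofReal (Real.exp (-(a * Real.cosh u))) = K a := by
    exact (setLIntegral_congr (Ioi_ae_eq_Ici (a := (0:ℝ)))).symm
  have h3 : ∫⁻ u in Iio (0:ℝ), ENNReal.ofReal (Real.exp (-(a * Real.cosh u))) = K a := by
    have hmp := Measure.measurePreserving_neg (volume : Measure ℝ)
    have hemb : MeasurableEmbedding (fun x : ℝ => -x) :=
      (Homeomorph.neg ℝ).measurableEmbedding
    have := hmp.setLIntegral_comp_preimage_emb hemb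
      (fun u => ENNReal.ofReal (Real.exp (-(a * Real.cosh u)))) (Iio 0)
    rw [show (fun x : ℝ => -x) ⁻¹' Iio 0 = Ioi 0 by ext x; simp] at this
    rw [← this]
    unfold K
    apply lintegral_congr
    intro u
    simp [Real.cosh_neg]
  rw [h1, h2, h3, two_mul]

lemma key (a : ℝ) (ha : 0 < a) :
    ∫⁻ x in Ioi (0:ℝ), f x * ENNReal.ofReal x⁻¹ * f (a / x)
      = ENNReal.ofReal a * K a := by
  set φ : ℝ → ℝ := fun u => Real.sqrt a * Real.exp (u / 2) with hφdef
  have hsa : (0:ℝ) < Real.sqrt a := Real.sqrt_pos.mpr ha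
  have himg : φ '' univ = Ioi 0 := by
    ext x
    simp only [image_univ, mem_range, mem_Ioi]
    constructor
    · rintro ⟨u, rfl⟩; positivity
    · intro hx
      refine ⟨2 * Real.log (x / Real.sqrt a), ?_⟩
      have hxa : 0 < x / Real.sqrt a := by positivity
      simp only [hφdef]
      rw [show 2 * Real.log (x / Real.sqrt a) / 2 = Real.log (x / Real.sqrt a) by ring,
        Real.exp_log hxa]
      field_simp
  have hderiv : ∀ u ∈ (univ : Set ℝ),
      HasDerivWithinAt φ (Real.sqrt a * Real.exp (u / 2) * (1/2)) univ u := by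
    intro u _
    have h : HasDerivAt (fun u : ℝ => Real.exp (u / 2)) (Real.exp (u / 2) * (1/2)) u := by
      simpa using (HasDerivAt.exp ((hasDerivAt_id u).div_const 2))
    have h2 : HasDerivAt φ (Real.sqrt a * Real.exp (u / 2) * (1/2)) u := by
      simpa [hφdef, mul_assoc] using (h.const_mul (Real.sqrt a))
    exact h2.hasDerivWithinAt
  have hinj : InjOn φ univ := by
    intro u _ v _ h
    simp only [hφdef] at h
    have := mul_left_cancel₀ (ne_of_gt hsa) h
    have := Real.exp_injective this
    linarith
  calc ∫⁻ x in Ioi (0:ℝ), f x * ENNReal.ofReal x⁻¹ * f (a / x)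
      = ∫⁻ u in (univ : Set ℝ), ENNReal.ofReal |Real.sqrt a * Real.exp (u / 2) * (1/2)|
          * (f (φ u) * ENNReal.ofReal (φ u)⁻¹ * f (a / φ u)) := by
        rw [← himg, lintegral_image MeasurableSet.univ hderiv hinj]
    _ = ∫⁻ u : ℝ, ENNReal.ofReal (a / 2 * Real.exp (-(a * Real.cosh u))) := by
        rw [Measure.restrict_univ]
        apply lintegral_congr
        intro u
        have hx : 0 < φ u := by simp only [hφdef]; positivity
        unfold f
        rw [abs_of_pos (by positivity)]
        rw [← ENNReal.ofReal_mul (by positivity), ← ENNReal.ofReal_mul (by positivity),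
          ← ENNReal.ofReal_mul (by positivity)]
        congr 1
        have hsq : φ u ^ 2 = a * Real.exp u := by
          simp only [hφdef]
          rw [mul_pow, Real.sq_sqrt ha.le, pow_two, ← Real.exp_add]
          ring_nf
        have hsq' : (a / φ u) ^ 2 = a * Real.exp (-u) := by
          rw [div_pow, hsq, Real.exp_neg]
          field_simp
        have hexp : Real.exp (-(φ u) ^ 2 / 2) * Real.exp (-(a / φ u) ^ 2 / 2)
            = Real.exp (-(a * Real.cosh u)) := by
          rw [← Real.exp_add, hsq, hsq', Real.cosh_eq]
          ring_nf
        have hcancel : Real.sqrt a * Real.exp (u / 2) * (a / φ u) = a := by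
          simp only [hφdef]
          field_simp
        calc Real.sqrt a * Real.exp (u / 2) * (1/2) *
              (φ u * Real.exp (-(φ u) ^ 2 / 2) * (φ u)⁻¹ * (a / φ u * Real.exp (-(a / φ u) ^ 2 / 2)))
            = (Real.sqrt a * Real.exp (u / 2) * (a / φ u)) * (1/2) * (φ u * (φ u)⁻¹) *
              (Real.exp (-(φ u) ^ 2 / 2) * Real.exp (-(a / φ u) ^ 2 / 2)) := by ring
          _ = a / 2 * Real.exp (-(a * Real.cosh u)) := by
              rw [hcancel, hexp, mul_inv_cancel₀ (ne_of_gt hx)]; ring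
    _ = ENNReal.ofReal (a / 2) * ∫⁻ u : ℝ, ENNReal.ofReal (Real.exp (-(a * Real.cosh u))) := by
        rw [← lintegral_const_mul _ (K_integrand_meas a)]
        apply lintegral_congr
        intro u
        rw [← ENNReal.ofReal_mul (by positivity)]
    _ = ENNReal.ofReal a * K a := by
        rw [lintegral_cosh_real, ← mul_assoc]
        congr 1
        rw [show (2:ℝ≥0∞) = ENNReal.ofReal 2 by simp, ← ENNReal.ofReal_mul (by positivity)]
        norm_num

noncomputable def ind (z : ℝ) (S : Set ℝ) : ℝ≥0∞ := S.indicator (fun _ => 1) z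

lemma ind_meas {S : Set ℝ} (hS : MeasurableSet S) : Measurable fun z => ind z S :=
  measurable_const.indicator hS

/-- main lintegral identity -/
lemma main_lintegral {S : Set ℝ} (hS : MeasurableSet S) (hS0 : S ⊆ Ioi 0) :
    ((volume.withDensity f).prod (volume.withDensity f)) {p : ℝ × ℝ | p.1 * p.2 ∈ S}
      = ∫⁻ z in S, ENNReal.ofReal z * K z := by
  have hSet : MeasurableSet {p : ℝ × ℝ | p.1 * p.2 ∈ S} :=
    (measurable_fst.mul measurable_snd) hS
  have hsf : SFinite (volume.withDensity f) := inferInstance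
  have hH : Measurable fun z : ℝ => ind z S * f z := (ind_meas hS).mul f_meas
  -- step 1: prod_apply + withDensity
  have h1 : ((volume.withDensity f).prod (volume.withDensity f)) {p : ℝ × ℝ | p.1 * p.2 ∈ S}
      = ∫⁻ x, f x * ∫⁻ y, ind (x * y) S * f y := by
    rw [Measure.prod_apply hSet]
    rw [lintegral_withDensity_eq_lintegral_mul volume f_meas
      (measurable_measure_prodMk_left hSet)]
    simp only [Pi.mul_apply]
    apply lintegral_congr
    intro x
    congr 1
    have hpre : MeasurableSet (Prod.mk x ⁻¹' {p : ℝ × ℝ | p.1 * p.2 ∈ S}) := by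
      exact (measurable_const.mul measurable_id) hS
    rw [withDensity_apply _ hpre, ← lintegral_indicator hpre]
    apply lintegral_congr
    intro y
    by_cases hy : x * y ∈ S <;> simp [ind, indicator, hy]
  rw [h1]
  -- step 2: inner substitution z = x*y
  have h2 : ∀ x : ℝ, f x * ∫⁻ y, ind (x * y) S * f y
      = ∫⁻ z, f x * ENNReal.ofReal x⁻¹ * (ind z S * f (z / x)) := by
    intro x
    rcases le_or_gt x 0 with hx | hx
    · simp [f_zero hx]
    · have hH' : Measurable fun z => ind z S * f (z / x) :=
        (ind_meas hS).mul (f_meas.comp (measurable_id.div_const x))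
      have hmap : ∫⁻ y, ind (x * y) S * f y
          = ∫⁻ z, ind z S * f (z / x) ∂(Measure.map (x * ·) volume) := by
        rw [lintegral_map hH' (measurable_const_mul x)]
        apply lintegral_congr
        intro y
        rw [mul_div_cancel_left₀ _ (ne_of_gt hx)]
      rw [hmap, Real.map_volume_mul_left (ne_of_gt hx), lintegral_smul_measure,
        lintegral_const_mul (f x * ENNReal.ofReal x⁻¹) hH',
        abs_inv, abs_of_pos hx, mul_assoc, smul_eq_mul]
  simp_rw [h2]
  -- step 3: swap order of integration
  have hFmeas : Measurable (Function.uncurry fun x z : ℝ =>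
      f x * ENNReal.ofReal x⁻¹ * (ind z S * f (z / x))) := by
    apply Measurable.mul
    · exact (f_meas.comp measurable_fst).mul measurable_fst.inv.ennreal_ofReal
    · exact ((ind_meas hS).comp measurable_snd).mul
        (f_meas.comp (measurable_snd.div measurable_fst))
  rw [lintegral_lintegral_swap hFmeas.aemeasurable]
  -- step 4: evaluate inner integral via `key`
  have h4 : ∀ z : ℝ, ∫⁻ x, f x * ENNReal.ofReal x⁻¹ * (ind z S * f (z / x))
      = S.indicator (fun z => ENNReal.ofReal z * K z) z := by
    intro z
    by_cases hz : z ∈ S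
    · have hz0 : (0:ℝ) < z := hS0 hz
      have e1 : ∀ x : ℝ, f x * ENNReal.ofReal x⁻¹ * (ind z S * f (z / x))
          = (Ioi (0:ℝ)).indicator (fun x => f x * ENNReal.ofReal x⁻¹ * f (z / x)) x := by
        intro x
        rcases le_or_gt x 0 with hx | hx
        · simp [f_zero hx, indicator_of_notMem (notMem_Ioi.mpr hx)]
        · simp [ind, indicator_of_mem hz, indicator_of_mem (mem_Ioi.mpr hx)]
      rw [lintegral_congr e1, lintegral_indicator measurableSet_Ioi _, key z hz0,
        indicator_of_mem hz]
    · simp [ind, indicator_of_notMem hz, lintegral_zero]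
  simp_rw [h4]
  rw [lintegral_indicator hS]


lemma I_integrable {z : ℝ} (hz : 0 < z) :
    IntegrableOn (fun u => Real.exp (-(z * Real.cosh u))) (Ioi (0:ℝ)) := by
  apply Integrable.mono' (exp_neg_integrableOn_Ioi 0 hz)
  · exact (Continuous.aestronglyMeasurable (by fun_prop))
  · refine (ae_restrict_iff' measurableSet_Ioi).mpr (ae_of_all _ fun u hu => ?_)
    rw [Real.norm_eq_abs, abs_of_pos (Real.exp_pos _), Real.exp_le_exp]
    have h1 : u < Real.sinh u := Real.self_lt_sinh_iff.mpr hu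
    have h2 : Real.sinh u < Real.cosh u := Real.sinh_lt_cosh u
    nlinarith

lemma I_nonneg (z : ℝ) : 0 ≤ ∫ u in Ioi (0:ℝ), Real.exp (-(z * Real.cosh u)) :=
  integral_nonneg fun u => (Real.exp_pos _).le

lemma K_eq_ofReal {z : ℝ} (hz : 0 < z) :
    K z = ENNReal.ofReal (∫ u in Ioi (0:ℝ), Real.exp (-(z * Real.cosh u))) := by
  rw [ofReal_integral_eq_lintegral_ofReal (I_integrable hz)
    (ae_of_all _ fun u => (Real.exp_pos _).le)]
  rfl

lemma I_stronglyMeasurable :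
    StronglyMeasurable fun z : ℝ => ∫ u in Ioi (0:ℝ), Real.exp (-(z * Real.cosh u)) := by
  apply MeasureTheory.StronglyMeasurable.integral_prod_right'
    (f := fun p : ℝ × ℝ => Real.exp (-(p.1 * Real.cosh p.2)))
  exact Continuous.stronglyMeasurable (by fun_prop)

end DR

/-- If `X` and `Y` are independent Rayleigh(1) random variables, then the product `X * Y` has
the double Rayleigh density `f x = x * ∫ u in (0,∞), exp (-x * cosh u) du = x * K₀ x` on
`(0, ∞)`: for every Borel set `S ⊆ (0, ∞)`,
`P (X * Y ∈ S) = ∫ x in S, x * ∫ u in (0,∞), exp (-x * cosh u) du dx`. -/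
theorem double_rayleigh_density {Ω : Type*} [MeasurableSpace Ω]
    (μ : Measure Ω) [IsProbabilityMeasure μ]
    (X Y : Ω → ℝ) (hX : IsRayleigh μ X) (hY : IsRayleigh μ Y) (hXY : IndepFun X Y μ)
    (S : Set ℝ) (hS : MeasurableSet S) (hS0 : S ⊆ Ioi 0) :
    μ {ω | X ω * Y ω ∈ S} =
      ENNReal.ofReal
        (∫ x in S, x * ∫ u in Ioi (0 : ℝ), Real.exp (-(x * Real.cosh u))) := by
  obtain ⟨hXm, hXd⟩ := hX
  obtain ⟨hYm, hYd⟩ := hY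
  have hSet : MeasurableSet {p : ℝ × ℝ | p.1 * p.2 ∈ S} :=
    (measurable_fst.mul measurable_snd) hS
  have hmap : Measure.map (fun ω => (X ω, Y ω)) μ
      = (Measure.map X μ).prod (Measure.map Y μ) :=
    (ProbabilityTheory.indepFun_iff_map_prod_eq_prod_map_map
      hXm.aemeasurable hYm.aemeasurable).mp hXY
  have h1 : μ {ω | X ω * Y ω ∈ S}
      = ((volume.withDensity DR.f).prod (volume.withDensity DR.f)) {p : ℝ × ℝ | p.1 * p.2 ∈ S} := by
    have fdef : DR.f = fun x => ENNReal.ofReal (x * Real.exp (-x ^ 2 / 2)) := rfl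
    calc μ {ω | X ω * Y ω ∈ S}
        = Measure.map (fun ω => (X ω, Y ω)) μ {p : ℝ × ℝ | p.1 * p.2 ∈ S} := by
          rw [Measure.map_apply (hXm.prodMk hYm) hSet]; rfl
      _ = ((Measure.map X μ).prod (Measure.map Y μ)) {p : ℝ × ℝ | p.1 * p.2 ∈ S} := by
          rw [hmap]
      _ = ((volume.withDensity DR.f).prod (volume.withDensity DR.f)) {p : ℝ × ℝ | p.1 * p.2 ∈ S} := by
          rw [hXd, hYd, ← fdef]
  set I : ℝ → ℝ := fun z => ∫ u in Ioi (0:ℝ), Real.exp (-(z * Real.cosh u)) with hIdef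
  have h2 : μ {ω | X ω * Y ω ∈ S} = ∫⁻ z in S, ENNReal.ofReal (z * I z) := by
    rw [h1, DR.main_lintegral hS hS0]
    apply setLIntegral_congr_fun hS
    exact fun z hz => by
      rw [DR.K_eq_ofReal (hS0 hz), ← ENNReal.ofReal_mul (hS0 hz).le]
  -- integrability of z * I z on S
  have hnn : 0 ≤ᵐ[volume.restrict S] fun z => z * I z := by
    refine (ae_restrict_iff' hS).mpr (ae_of_all _ fun z hz => ?_)
    exact mul_nonneg (hS0 hz).le (DR.I_nonneg z)
  have hsm : AEStronglyMeasurable (fun z => z * I z) (volume.restrict S) :=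
    (measurable_id.mul DR.I_stronglyMeasurable.measurable).aestronglyMeasurable
  have hfi : HasFiniteIntegral (fun z => z * I z) (volume.restrict S) := by
    rw [hasFiniteIntegral_iff_ofReal hnn, ← h2]
    exact measure_lt_top μ _
  rw [h2, ← ofReal_integral_eq_lintegral_ofReal ⟨hsm, hfi⟩ hnn]
end

section
/- For every x > 0, ∫_0^∞ t^{−1} exp(−(t² + x²/t²)/2) dt = ∫_0^∞ exp(−x cosh u) du. -/
open Real MeasureTheory Set

/-- For every `x > 0`, the Mellin-type convolution integral computing the density of the
product of two independent Rayleigh(1) random variables equals the integral representation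
of the modified Bessel function `K₀`:
`∫ t in (0,∞), t⁻¹ * exp (-(t² + x²/t²)/2) dt = ∫ u in (0,∞), exp (-x * cosh u) du`. -/
theorem product_density_eq_besselK_integral (x : ℝ) (hx : 0 < x) :
    ∫ t in Ioi (0 : ℝ), t⁻¹ * Real.exp (-(t ^ 2 + x ^ 2 / t ^ 2) / 2) =
      ∫ u in Ioi (0 : ℝ), Real.exp (-(x * Real.cosh u)) := by
  have hderiv : ∀ s ∈ (univ : Set ℝ), HasDerivWithinAt Real.exp (Real.exp s) univ s :=
    fun s _ => (Real.hasDerivAt_exp s).hasDerivWithinAt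
  have key := integral_image_eq_integral_abs_deriv_smul MeasurableSet.univ hderiv
      Real.exp_injective.injOn
      (fun t => t⁻¹ * Real.exp (-(t ^ 2 + x ^ 2 / t ^ 2) / 2))
  rw [Set.image_univ, Real.range_exp] at key
  rw [key, setIntegral_univ]
  set F : ℝ → ℝ := fun s =>
    |Real.exp s| • ((Real.exp s)⁻¹ * Real.exp (-((Real.exp s) ^ 2 + x ^ 2 / (Real.exp s) ^ 2) / 2))
  have hshift : (∫ s, F s) = ∫ u, F (u + Real.log x / 2) :=
    (integral_add_right_eq_self F (Real.log x / 2)).symm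
  have hF : ∀ u : ℝ, F (u + Real.log x / 2) = Real.exp (-(x * Real.cosh (2 * u))) := by
    intro u
    have he : Real.exp (u + Real.log x / 2) ^ 2 = x * Real.exp (2 * u) := by
      rw [← Real.exp_nat_mul]
      push_cast
      rw [mul_add, mul_div_cancel₀ _ (two_ne_zero), Real.exp_add, Real.exp_log hx]
      ring
    have hepos : (0 : ℝ) < Real.exp (u + Real.log x / 2) := Real.exp_pos _
    simp only [F, abs_of_pos hepos, smul_eq_mul, ← mul_assoc,
      mul_inv_cancel₀ hepos.ne', one_mul]
    congr 1
    rw [he, Real.cosh_eq]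
    have h1 : Real.exp (2 * u) * Real.exp (-(2 * u)) = 1 := by
      rw [← Real.exp_add]; simp
    field_simp
    linear_combination h1
  rw [hshift]
  simp_rw [hF]
  have hhalf : (∫ u : ℝ, Real.exp (-(x * Real.cosh (2 * u)))) =
      |(2 : ℝ)⁻¹| • ∫ v : ℝ, Real.exp (-(x * Real.cosh v)) :=
    Measure.integral_comp_mul_left (fun v => Real.exp (-(x * Real.cosh v))) 2
  have habs : (∫ v : ℝ, Real.exp (-(x * Real.cosh v))) =
      2 * ∫ v in Ioi (0 : ℝ), Real.exp (-(x * Real.cosh v)) := by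
    rw [← integral_comp_abs (f := fun v => Real.exp (-(x * Real.cosh v)))]
    simp [Real.cosh_abs]
  rw [hhalf, habs]
  rw [abs_of_pos (by norm_num : (0:ℝ) < 2⁻¹), smul_eq_mul]
  ring
end

section
/- Let a > −1 and b > 0, and let f(y) = y^a e^{−y/b}/(b^{a+1} Γ(a+1)) be the Gamma-type density on (0,∞). Then lim_{ρ→∞} ( ∫_0^∞ log₂(1 + ρ y²) f(y) dy − log₂ ρ ) = 2 ∫_0^∞ log₂(y) f(y) dy, where the right-hand integral is finite. -/
open Real MeasureTheory Set Filter Topology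

private lemma int_aux {s b : ℝ} (hs : -1 < s) (hb : 0 < b) :
    IntegrableOn (fun y : ℝ => y ^ s * Real.exp (-y / b)) (Ioi 0) := by
  have h := integrableOn_rpow_mul_exp_neg_mul_rpow (p := 1) hs one_pos (inv_pos.mpr hb)
  refine h.congr_fun (fun x _ => ?_) measurableSet_Ioi
  simp only [Real.rpow_one]
  ring_nf

private lemma int_log_aux {s b : ℝ} (hs : -1 < s) (hb : 0 < b) :
    IntegrableOn (fun y : ℝ => |Real.log y| * (y ^ s * Real.exp (-y / b))) (Ioi 0) := by
  have hmeas : Measurable fun y : ℝ => |Real.log y| * (y ^ s * Real.exp (-y / b)) :=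
    (Real.measurable_log.abs).mul ((measurable_id.pow measurable_const).mul
      ((measurable_id.neg.div_const b).exp))
  rw [show Ioi (0:ℝ) = Ioc 0 1 ∪ Ioi 1 from (Ioc_union_Ioi_eq_Ioi zero_le_one).symm]
  apply IntegrableOn.union
  · set ε : ℝ := (s + 1) / 2 with hεdef
    have hε : 0 < ε := by rw [hεdef]; linarith
    have hse : -1 < s - ε := by rw [hεdef]; linarith
    have base : IntegrableOn (fun y : ℝ => y ^ (s - ε) * Real.exp (-y / b)) (Ioc 0 1) :=
      (int_aux hse hb).mono_set Ioc_subset_Ioi_self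
    refine Integrable.mono' (base.const_mul ε⁻¹) hmeas.aestronglyMeasurable ?_
    rw [ae_restrict_iff' measurableSet_Ioc]
    refine ae_of_all _ fun y hy => ?_
    obtain ⟨hy0, hy1⟩ := hy
    have hlog : |Real.log y| ≤ y ^ (-ε) / ε := by
      rw [abs_of_nonpos (Real.log_nonpos hy0.le hy1), ← Real.log_inv]
      calc Real.log y⁻¹ ≤ (y⁻¹) ^ ε / ε := Real.log_le_rpow_div (by positivity) hε
        _ = y ^ (-ε) / ε := by
            rw [← Real.rpow_neg_one, ← Real.rpow_mul hy0.le]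
            norm_num
    rw [Real.norm_eq_abs, abs_of_nonneg (by positivity)]
    calc |Real.log y| * (y ^ s * Real.exp (-y / b))
        ≤ (y ^ (-ε) / ε) * (y ^ s * Real.exp (-y / b)) :=
          mul_le_mul_of_nonneg_right hlog (by positivity)
      _ = ε⁻¹ * (y ^ (s - ε) * Real.exp (-y / b)) := by
          rw [show s - ε = -ε + s by ring, Real.rpow_add hy0]
          ring
  · have base := (int_aux (show (-1:ℝ) < s + 1 by linarith) hb).mono_set
      (Ioi_subset_Ioi zero_le_one)
    refine Integrable.mono' base hmeas.aestronglyMeasurable ?_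
    rw [ae_restrict_iff' measurableSet_Ioi]
    refine ae_of_all _ fun y hy => ?_
    have hy1 : (1:ℝ) < y := hy
    have hy0 : (0:ℝ) < y := lt_trans one_pos hy1
    have hlog : |Real.log y| ≤ y := by
      rw [abs_of_nonneg (Real.log_nonneg hy1.le)]
      linarith [Real.log_le_sub_one_of_pos hy0]
    rw [Real.norm_eq_abs, abs_of_nonneg (by positivity)]
    calc |Real.log y| * (y ^ s * Real.exp (-y / b))
        ≤ y * (y ^ s * Real.exp (-y / b)) :=
          mul_le_mul_of_nonneg_right hlog (by positivity)
      _ = y ^ (s + 1) * Real.exp (-y / b) := by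
          rw [show s + 1 = 1 + s by ring, Real.rpow_add hy0, Real.rpow_one]
          ring

private lemma integral_aux {s b : ℝ} (hs : -1 < s) (hb : 0 < b) :
    ∫ y in Ioi (0:ℝ), y ^ s * Real.exp (-y / b) = b ^ (s + 1) * Real.Gamma (s + 1) := by
  have h := Real.integral_rpow_mul_exp_neg_mul_Ioi (a := s + 1) (r := b⁻¹)
    (by linarith) (inv_pos.mpr hb)
  simp only [add_sub_cancel_right, one_div, inv_inv] at h
  rw [← h]
  refine setIntegral_congr_fun measurableSet_Ioi fun t ht => ?_
  congr 1
  ring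

/-- High-SNR approximation of the ergodic capacity: for the Gamma-type density
`f y = y^a e^(-y/b) / (b^(a+1) Γ(a+1))` on `(0, ∞)` with `a > -1` and `b > 0`,
`∫ y in (0,∞), log₂ (1 + ρ y²) f y dy - log₂ ρ` converges, as `ρ → ∞`, to the finite
constant `2 ∫ y in (0,∞), log₂ y * f y dy`. -/
theorem ergodic_capacity_high_snr (a b : ℝ) (ha : -1 < a) (hb : 0 < b)
    (f : ℝ → ℝ)
    (hf : ∀ y : ℝ, f y = y ^ a * Real.exp (-y / b) / (b ^ (a + 1) * Real.Gamma (a + 1))) :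
    IntegrableOn (fun y : ℝ => Real.logb 2 y * f y) (Ioi 0) ∧
      Tendsto
        (fun ρ : ℝ =>
          (∫ y in Ioi (0 : ℝ), Real.logb 2 (1 + ρ * y ^ 2) * f y) - Real.logb 2 ρ)
        atTop (𝓝 (2 * ∫ y in Ioi (0 : ℝ), Real.logb 2 y * f y)) := by
  set c : ℝ := b ^ (a + 1) * Real.Gamma (a + 1) with hcdef
  have hΓ : 0 < Real.Gamma (a + 1) := Real.Gamma_pos_of_pos (by linarith)
  have hc : 0 < c := by positivity
  have hg := int_aux ha hb
  have hlg := int_log_aux ha hb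
  have h2 : (0:ℝ) < Real.log 2 := Real.log_pos one_lt_two
  have hfmeas : Measurable f := by
    have hfe : f = fun y => y ^ a * Real.exp (-y / b) / c := funext hf
    rw [hfe]
    exact ((measurable_id.pow measurable_const).mul
      ((measurable_id.neg.div_const b).exp)).div_const c
  have hfint : IntegrableOn f (Ioi 0) := by
    refine IntegrableOn.congr_fun (hg.div_const c) (fun y _ => (hf y).symm) measurableSet_Ioi
  have hfnonneg : ∀ y ∈ Ioi (0:ℝ), 0 ≤ f y := fun y hy => by
    rw [hf]
    have hy0 : (0:ℝ) < y := hy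
    positivity
  have hint_f : ∫ y in Ioi (0:ℝ), f y = 1 := by
    simp only [hf]
    rw [integral_div, integral_aux ha hb, div_self hc.ne']
  have hlogf : IntegrableOn (fun y => |Real.log y| * f y) (Ioi 0) := by
    refine IntegrableOn.congr_fun (hlg.div_const c) (fun y _ => ?_) measurableSet_Ioi
    rw [hf]; ring
  have part1 : IntegrableOn (fun y : ℝ => Real.logb 2 y * f y) (Ioi 0) := by
    refine Integrable.mono' (hlogf.div_const (Real.log 2) : IntegrableOn _ _ _) ?_ ?_
    · exact ((Real.measurable_log.div_const _ : Measurable fun y : ℝ => Real.logb 2 y).mul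
        hfmeas).aestronglyMeasurable
    · rw [ae_restrict_iff' measurableSet_Ioi]
      refine ae_of_all _ fun y hy => ?_
      rw [Real.norm_eq_abs, abs_mul, abs_of_nonneg (hfnonneg y hy), Real.logb, abs_div,
        abs_of_nonneg h2.le, div_mul_eq_mul_div]
  refine ⟨part1, ?_⟩
  -- dominating function
  set B : ℝ → ℝ := fun y => (Real.log 2 + 2 * |Real.log y|) / Real.log 2 * f y with hBdef
  have hB_int : Integrable B (volume.restrict (Ioi 0)) := by
    have hBe : B = fun y => f y + (2 / Real.log 2) * (|Real.log y| * f y) := by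
      funext y; rw [hBdef]; field_simp
    rw [hBe]
    exact hfint.add (hlogf.const_mul _)
  -- key bound
  have key : ∀ ε : ℝ, 0 < ε → ε ≤ 1 → ∀ y : ℝ, 0 < y →
      |Real.log (ε + y ^ 2)| ≤ Real.log 2 + 2 * |Real.log y| := by
    intro ε hε hε1 y hy
    have hy2 : (0:ℝ) < y ^ 2 := by positivity
    have hl2 : (0:ℝ) ≤ Real.log 2 := h2.le
    rw [abs_le]
    constructor
    · have h1 : Real.log (y ^ 2) ≤ Real.log (ε + y ^ 2) :=
        Real.log_le_log hy2 (by linarith)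
      rw [Real.log_pow] at h1
      push_cast at h1
      have hab := neg_abs_le (Real.log y)
      linarith
    · have h1 : Real.log (ε + y ^ 2) ≤ Real.log (1 + y ^ 2) :=
        Real.log_le_log (by positivity) (by linarith)
      rcases le_or_gt y 1 with hle | hlt
      · have h3 : Real.log (1 + y ^ 2) ≤ Real.log 2 :=
          Real.log_le_log (by positivity) (by nlinarith)
        have := abs_nonneg (Real.log y)
        linarith
      · have h3 : Real.log (1 + y ^ 2) ≤ Real.log (2 * y ^ 2) :=
          Real.log_le_log (by positivity) (by nlinarith)
        rw [Real.log_mul (by norm_num) (ne_of_gt hy2), Real.log_pow] at h3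
        push_cast at h3
        have hab := le_abs_self (Real.log y)
        linarith
  have hFmeas : ∀ ρ : ℝ, AEStronglyMeasurable (fun y => Real.logb 2 (ρ⁻¹ + y ^ 2) * f y)
      (volume.restrict (Ioi 0)) := fun ρ =>
    (((Real.measurable_log.comp (measurable_const.add
      (measurable_id.pow measurable_const))).div_const _ :
        Measurable fun y : ℝ => Real.logb 2 (ρ⁻¹ + y ^ 2)).mul hfmeas).aestronglyMeasurable
  have hFbound : ∀ ρ : ℝ, 1 ≤ ρ → ∀ y ∈ Ioi (0:ℝ),
      ‖Real.logb 2 (ρ⁻¹ + y ^ 2) * f y‖ ≤ B y := by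
    intro ρ hρ y hy
    have hy0 : (0:ℝ) < y := hy
    have hρ0 : (0:ℝ) < ρ := lt_of_lt_of_le one_pos hρ
    have hk := key ρ⁻¹ (inv_pos.mpr hρ0) (inv_le_one_of_one_le₀ hρ) y hy0
    rw [Real.norm_eq_abs, abs_mul, abs_of_nonneg (hfnonneg y hy), hBdef, Real.logb, abs_div,
      abs_of_nonneg h2.le]
    exact mul_le_mul_of_nonneg_right ((div_le_div_iff_of_pos_right h2).mpr hk) (hfnonneg y hy)
  have hFint : ∀ ρ : ℝ, 1 ≤ ρ →
      IntegrableOn (fun y => Real.logb 2 (ρ⁻¹ + y ^ 2) * f y) (Ioi 0) := by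
    intro ρ hρ
    refine Integrable.mono' hB_int (hFmeas ρ) ?_
    rw [ae_restrict_iff' measurableSet_Ioi]
    exact ae_of_all _ (hFbound ρ hρ)
  have hEq : ∀ᶠ ρ : ℝ in atTop,
      (∫ y in Ioi (0:ℝ), Real.logb 2 (1 + ρ * y ^ 2) * f y) - Real.logb 2 ρ
        = ∫ y in Ioi (0:ℝ), Real.logb 2 (ρ⁻¹ + y ^ 2) * f y := by
    filter_upwards [eventually_ge_atTop (1:ℝ)] with ρ hρ
    have hρ0 : (0:ℝ) < ρ := lt_of_lt_of_le one_pos hρ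
    have hsplit : EqOn (fun y : ℝ => Real.logb 2 (1 + ρ * y ^ 2) * f y)
        (fun y : ℝ => Real.logb 2 (ρ⁻¹ + y ^ 2) * f y + Real.logb 2 ρ * f y) (Ioi 0) := by
      intro y hy
      have hy0 : (0:ℝ) < y := hy
      have hrw : (1 : ℝ) + ρ * y ^ 2 = ρ * (ρ⁻¹ + y ^ 2) := by field_simp
      simp only
      rw [hrw, Real.logb_mul (ne_of_gt hρ0) (by positivity)]
      ring
    rw [setIntegral_congr_fun measurableSet_Ioi hsplit,
      integral_add (hFint ρ hρ) (hfint.const_mul _), integral_const_mul, hint_f]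
    ring
  have hlim : ∀ y ∈ Ioi (0:ℝ),
      Tendsto (fun ρ : ℝ => Real.logb 2 (ρ⁻¹ + y ^ 2) * f y) atTop
        (𝓝 (2 * Real.logb 2 y * f y)) := by
    intro y hy
    have hy0 : (0:ℝ) < y := hy
    have hy2 : (0:ℝ) < y ^ 2 := by positivity
    have h1 : Tendsto (fun ρ : ℝ => ρ⁻¹ + y ^ 2) atTop (𝓝 (y ^ 2)) := by
      have := (tendsto_inv_atTop_zero (𝕜 := ℝ)).add (tendsto_const_nhds (x := y ^ 2))
      simpa using this
    have h2' : Tendsto (fun ρ : ℝ => Real.logb 2 (ρ⁻¹ + y ^ 2)) atTop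
        (𝓝 (Real.logb 2 (y ^ 2))) :=
      (Real.continuousAt_logb (ne_of_gt hy2)).tendsto.comp h1
    have h3 : Real.logb 2 (y ^ 2) = 2 * Real.logb 2 y := by
      rw [Real.logb_pow]; push_cast; ring
    have := h2'.mul_const (f y)
    rw [h3] at this
    simpa [mul_assoc] using this
  have hDCT := tendsto_integral_filter_of_dominated_convergence
      (μ := volume.restrict (Ioi 0)) (l := atTop)
      (F := fun ρ : ℝ => fun y => Real.logb 2 (ρ⁻¹ + y ^ 2) * f y)
      (f := fun y => 2 * Real.logb 2 y * f y) B
      (Eventually.of_forall hFmeas)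
      (by
        filter_upwards [eventually_ge_atTop (1:ℝ)] with ρ hρ
        rw [ae_restrict_iff' measurableSet_Ioi]
        exact ae_of_all _ (hFbound ρ hρ))
      hB_int
      (by
        rw [ae_restrict_iff' measurableSet_Ioi]
        exact ae_of_all _ hlim)
  have hfin : ∫ y in Ioi (0:ℝ), 2 * Real.logb 2 y * f y
      = 2 * ∫ y in Ioi (0:ℝ), Real.logb 2 y * f y := by
    simp_rw [mul_assoc]
    exact integral_const_mul 2 _
  rw [← hfin]
  exact hDCT.congr' (Filter.EventuallyEq.symm hEq)
end

section
/- Let a > −1 and b > 0. The logarithmic moment of the Gamma-type density f(y) = y^a e^{−y/b}/(b^{a+1} Γ(a+1)) satisfies ∫_0^∞ (ln y) f(y) dy = ln b + Γ′(a+1)/Γ(a+1). Consequently, the high-SNR limit of the ergodic capacity satisfies lim_{ρ→∞} ( ∫_0^∞ log₂(1 + ρ y²) f(y) dy − log₂(b² ρ) ) = (2/ln 2) · Γ′(a+1)/Γ(a+1). -/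
open Real MeasureTheory Set Filter Topology Complex Asymptotics

lemma erg_mellinConv (s : ℝ) (hs : 0 < s) :
    MellinConvergent (fun t => Real.log t • ((Real.exp (-t) : ℝ) : ℂ)) (s : ℂ) := by
  refine (mellin_hasDerivAt_of_isBigO_rpow (E := ℂ) (a := s + 1) (b := 0) ?_ ?_ ?_ ?_ ?_).1
  · exact (Complex.continuous_ofReal.comp
      (Real.continuous_exp.comp continuous_neg)).continuousOn.locallyIntegrableOn
      measurableSet_Ioi
  · rw [← isBigO_norm_left]
    simp_rw [Complex.norm_real, isBigO_norm_left]
    simpa only [neg_one_mul] using (isLittleO_exp_neg_mul_rpow_atTop zero_lt_one _).isBigO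
  · simpa using lt_add_one s
  · simp_rw [neg_zero, Real.rpow_zero]
    refine isBigO_const_of_tendsto (?_ : Tendsto _ _ (𝓝 (1 : ℂ))) one_ne_zero
    rw [(by simp : (1 : ℂ) = Real.exp (-0))]
    exact (Complex.continuous_ofReal.comp
      (Real.continuous_exp.comp continuous_neg)).continuousWithinAt
  · simpa using hs

lemma erg_pointwise (s t : ℝ) (ht : 0 < t) :
    ((t:ℂ) ^ ((s:ℂ) - 1) • (Real.log t • ((Real.exp (-t) : ℝ) : ℂ)))
      = ((Real.log t * (t ^ (s - 1) * Real.exp (-t)) : ℝ) : ℂ) := by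
  simp only [smul_eq_mul, Complex.real_smul]
  rw [show ((s:ℂ) - 1) = ((s - 1 : ℝ) : ℂ) by push_cast; ring, ← Complex.ofReal_cpow ht.le]
  push_cast
  ring

lemma erg_log_integrable (s : ℝ) (hs : 0 < s) :
    IntegrableOn (fun t : ℝ => Real.log t * (t ^ (s - 1) * Real.exp (-t))) (Ioi 0) := by
  have h := erg_mellinConv s hs
  rw [MellinConvergent] at h
  have h2 : IntegrableOn
      (fun t : ℝ => ((t:ℂ) ^ ((s:ℂ) - 1) • (Real.log t • ((Real.exp (-t) : ℝ) : ℂ))).re)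
      (Ioi 0) := h.re
  refine h2.congr_fun (fun t ht => ?_) measurableSet_Ioi
  dsimp only
  rw [erg_pointwise s t ht, Complex.ofReal_re]

lemma erg_hasDerivAt_Gamma (s : ℝ) (hs : 0 < s) :
    HasDerivAt Real.Gamma
      (∫ t : ℝ in Ioi 0, Real.log t * (t ^ (s - 1) * Real.exp (-t))) s := by
  have h1 : HasDerivAt Complex.GammaIntegral
      (∫ t : ℝ in Ioi 0, (t:ℂ) ^ ((s:ℂ) - 1) * (Real.log t * Real.exp (-t))) (s : ℂ) :=
    Complex.hasDerivAt_GammaIntegral (by simpa using hs)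
  have heq : Complex.Gamma =ᶠ[𝓝 (s:ℂ)] Complex.GammaIntegral := by
    filter_upwards [(Complex.continuous_re.isOpen_preimage _ isOpen_Ioi).mem_nhds
      (by simpa using hs : (s:ℂ) ∈ Complex.re ⁻¹' Ioi 0)] with z hz
    exact Complex.Gamma_eq_integral hz
  have h2 := h1.congr_of_eventuallyEq heq
  have hval : (∫ t : ℝ in Ioi 0, (t:ℂ) ^ ((s:ℂ) - 1) * (Real.log t * Real.exp (-t)))
      = (((∫ t : ℝ in Ioi 0, Real.log t * (t ^ (s - 1) * Real.exp (-t)) : ℝ) : ℂ)) := by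
    refine (setIntegral_congr_fun measurableSet_Ioi (fun t ht => ?_) :
        _ = ∫ t : ℝ in Ioi 0,
          ((Real.log t * (t ^ (s - 1) * Real.exp (-t)) : ℝ) : ℂ)).trans integral_ofReal
    have ht' : (0:ℝ) < t := ht
    rw [show ((s:ℂ) - 1) = ((s - 1 : ℝ) : ℂ) by push_cast; ring, ← Complex.ofReal_cpow ht'.le]
    push_cast; ring
  rw [hval] at h2
  have h3 := h2.real_of_complex
  simpa only [Complex.Gamma_ofReal, Complex.ofReal_re] using h3

lemma erg_deriv_Gamma (s : ℝ) (hs : 0 < s) :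
    deriv Real.Gamma s = ∫ t : ℝ in Ioi 0, Real.log t * (t ^ (s - 1) * Real.exp (-t)) :=
  (erg_hasDerivAt_Gamma s hs).deriv

lemma erg_int_t (s : ℝ) (hs : 0 < s) :
    IntegrableOn (fun t : ℝ => t ^ (s - 1) * Real.exp (-t)) (Ioi 0) :=
  (Real.GammaIntegral_convergent hs).congr_fun (fun t _ => mul_comm _ _) measurableSet_Ioi


/-- Let `a > -1` and `b > 0`. The logarithmic moment of the Gamma-type density
`f y = y^a e^(-y/b) / (b^(a+1) Γ(a+1))` satisfies
`∫ y in (0,∞), ln y * f y dy = ln b + Γ′(a+1)/Γ(a+1)`; consequently, the high-SNR limit of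
the ergodic capacity satisfies
`lim_{ρ→∞} (∫ y in (0,∞), log₂ (1 + ρ y²) f y dy - log₂ (b² ρ)) = (2/ln 2) Γ′(a+1)/Γ(a+1)`. -/
theorem ergodic_capacity_high_snr_digamma (a b : ℝ) (ha : -1 < a) (hb : 0 < b)
    (f : ℝ → ℝ)
    (hf : ∀ y : ℝ, f y = y ^ a * Real.exp (-y / b) / (b ^ (a + 1) * Real.Gamma (a + 1))) :
    (∫ y in Ioi (0 : ℝ), Real.log y * f y) =
        Real.log b + deriv Real.Gamma (a + 1) / Real.Gamma (a + 1) ∧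
      Tendsto
        (fun ρ : ℝ =>
          (∫ y in Ioi (0 : ℝ), Real.logb 2 (1 + ρ * y ^ 2) * f y) -
            Real.logb 2 (b ^ 2 * ρ))
        atTop
        (𝓝 (2 / Real.log 2 * (deriv Real.Gamma (a + 1) / Real.Gamma (a + 1)))) := by
  have hs : 0 < a + 1 := by linarith
  have hΓ : 0 < Real.Gamma (a + 1) := Real.Gamma_pos_of_pos hs
  have hB : 0 < b ^ (a + 1) := Real.rpow_pos_of_pos hb _
  have hC : 0 < b ^ (a + 1) * Real.Gamma (a + 1) := mul_pos hB hΓ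
  have hsu : a + 1 - 1 = a := by ring
  -- t-space integrability and values
  have int_t : IntegrableOn (fun t : ℝ => t ^ a * Real.exp (-t)) (Ioi 0) := by
    have := erg_int_t (a + 1) hs; rwa [hsu] at this
  have int_t2 : IntegrableOn (fun t : ℝ => t ^ (a + 2) * Real.exp (-t)) (Ioi 0) := by
    have := erg_int_t (a + 3) (by linarith)
    have h3 : a + 3 - 1 = a + 2 := by ring
    rwa [h3] at this
  have int_logt : IntegrableOn (fun t : ℝ => Real.log t * (t ^ a * Real.exp (-t))) (Ioi 0) := by
    have := erg_log_integrable (a + 1) hs; rwa [hsu] at this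
  have hGamma_val : Real.Gamma (a + 1) = ∫ t in Ioi (0:ℝ), t ^ a * Real.exp (-t) := by
    rw [Real.Gamma_eq_integral hs, hsu]
    exact setIntegral_congr_fun measurableSet_Ioi fun t _ => mul_comm _ _
  have hG' : deriv Real.Gamma (a + 1)
      = ∫ t in Ioi (0:ℝ), Real.log t * (t ^ a * Real.exp (-t)) := by
    have := erg_deriv_Gamma (a + 1) hs; rwa [hsu] at this
  -- scaling
  have key_scale : ∀ g : ℝ → ℝ, IntegrableOn (fun t => g (b * t)) (Ioi 0) →
      IntegrableOn g (Ioi 0) := fun g hg => by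
    simpa using (integrableOn_Ioi_comp_mul_left_iff g 0 hb).mp hg
  have scale_int : ∀ g : ℝ → ℝ, (∫ y in Ioi (0:ℝ), g y) = b * ∫ t in Ioi (0:ℝ), g (b * t) := by
    intro g
    have := integral_comp_mul_left_Ioi g 0 hb
    rw [mul_zero] at this
    rw [this, smul_eq_mul]
    field_simp
  have hcomp1 : ∀ c : ℝ, ∀ t ∈ Ioi (0:ℝ),
      b ^ c * (t ^ c * Real.exp (-t)) = (b * t) ^ c * Real.exp (-(b * t) / b) := by
    intro c t ht
    have ht' : (0:ℝ) < t := ht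
    rw [Real.mul_rpow hb.le ht'.le, neg_div, mul_div_cancel_left₀ _ hb.ne']
    ring
  have J1 : IntegrableOn (fun y : ℝ => y ^ a * Real.exp (-y / b)) (Ioi 0) := by
    refine key_scale _ (IntegrableOn.congr_fun (int_t.const_mul (b ^ a))
      (fun t ht => hcomp1 a t ht) measurableSet_Ioi)
  have J3 : IntegrableOn (fun y : ℝ => y ^ (a + 2) * Real.exp (-y / b)) (Ioi 0) := by
    refine key_scale _ (IntegrableOn.congr_fun (int_t2.const_mul (b ^ (a + 2)))
      (fun t ht => hcomp1 (a + 2) t ht) measurableSet_Ioi)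
  have J2 : IntegrableOn (fun y : ℝ => Real.log y * (y ^ a * Real.exp (-y / b))) (Ioi 0) := by
    refine key_scale _ ?_
    have hint : IntegrableOn
        (fun t : ℝ => b ^ a * Real.log b * (t ^ a * Real.exp (-t))
          + b ^ a * (Real.log t * (t ^ a * Real.exp (-t)))) (Ioi 0) :=
      (int_t.const_mul _).add (int_logt.const_mul _)
    refine IntegrableOn.congr_fun hint (fun t ht => ?_) measurableSet_Ioi
    have ht' : (0:ℝ) < t := ht
    rw [← hcomp1 a t ht, Real.log_mul hb.ne' ht'.ne']
    ring
  -- integral values in y-space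
  have I1 : (∫ y in Ioi (0:ℝ), y ^ a * Real.exp (-y / b))
      = b ^ (a + 1) * Real.Gamma (a + 1) := by
    rw [scale_int (fun y => y ^ a * Real.exp (-y / b))]
    have : (∫ t in Ioi (0:ℝ), (b * t) ^ a * Real.exp (-(b * t) / b))
        = ∫ t in Ioi (0:ℝ), b ^ a * (t ^ a * Real.exp (-t)) :=
      setIntegral_congr_fun measurableSet_Ioi fun t ht => (hcomp1 a t ht).symm
    rw [this, integral_const_mul, ← hGamma_val, Real.rpow_add hb, Real.rpow_one]
    ring
  have I2 : (∫ y in Ioi (0:ℝ), Real.log y * (y ^ a * Real.exp (-y / b)))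
      = b ^ (a + 1) * Real.Gamma (a + 1) * Real.log b
        + b ^ (a + 1) * deriv Real.Gamma (a + 1) := by
    rw [scale_int (fun y => Real.log y * (y ^ a * Real.exp (-y / b)))]
    have : (∫ t in Ioi (0:ℝ), Real.log (b * t) * ((b * t) ^ a * Real.exp (-(b * t) / b)))
        = ∫ t in Ioi (0:ℝ), (b ^ a * Real.log b * (t ^ a * Real.exp (-t))
          + b ^ a * (Real.log t * (t ^ a * Real.exp (-t)))) := by
      refine setIntegral_congr_fun measurableSet_Ioi fun t ht => ?_
      have ht' : (0:ℝ) < t := ht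
      rw [← hcomp1 a t ht, Real.log_mul hb.ne' ht'.ne']
      ring
    rw [this, integral_add (int_t.const_mul _) (int_logt.const_mul _), integral_const_mul,
      integral_const_mul, ← hGamma_val, ← hG', Real.rpow_add hb, Real.rpow_one]
    ring
  -- part 1
  have part1 : (∫ y in Ioi (0:ℝ), Real.log y * f y)
      = Real.log b + deriv Real.Gamma (a + 1) / Real.Gamma (a + 1) := by
    have hrw : (∫ y in Ioi (0:ℝ), Real.log y * f y)
        = (∫ y in Ioi (0:ℝ), Real.log y * (y ^ a * Real.exp (-y / b)))
            / (b ^ (a + 1) * Real.Gamma (a + 1)) := by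
      rw [← integral_div]
      exact setIntegral_congr_fun measurableSet_Ioi fun y _ => by rw [hf y]; ring
    rw [hrw, I2]
    field_simp
  refine ⟨part1, ?_⟩
  -- normalization and integrability facts in y-space
  have hf_int : IntegrableOn f (Ioi 0) :=
    IntegrableOn.congr_fun (J1.div_const _) (fun y _ => (hf y).symm) measurableSet_Ioi
  have hf_one : (∫ y in Ioi (0:ℝ), f y) = 1 := by
    have hrw : (∫ y in Ioi (0:ℝ), f y)
        = (∫ y in Ioi (0:ℝ), y ^ a * Real.exp (-y / b))
            / (b ^ (a + 1) * Real.Gamma (a + 1)) := by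
      rw [← integral_div]
      exact setIntegral_congr_fun measurableSet_Ioi fun y _ => hf y
    rw [hrw, I1, div_self hC.ne']
  have hfpos : ∀ y ∈ Ioi (0:ℝ), 0 ≤ f y := fun y hy => by
    have hy' : (0:ℝ) < y := hy
    rw [hf y]; positivity
  have hlog_f_int : IntegrableOn (fun y : ℝ => Real.log y * f y) (Ioi 0) :=
    IntegrableOn.congr_fun (J2.div_const (b ^ (a + 1) * Real.Gamma (a + 1)))
      (fun y _ => by rw [hf y]; ring) measurableSet_Ioi
  have habs_log_f : IntegrableOn (fun y : ℝ => |Real.log y| * f y) (Ioi 0) :=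
    IntegrableOn.congr_fun hlog_f_int.abs
      (fun y hy => by rw [abs_mul, _root_.abs_of_nonneg (hfpos y hy)]) measurableSet_Ioi
  have hsq_f : IntegrableOn (fun y : ℝ => y ^ 2 * f y) (Ioi 0) := by
    refine IntegrableOn.congr_fun (J3.div_const (b ^ (a + 1) * Real.Gamma (a + 1)))
      (fun y hy => ?_) measurableSet_Ioi
    have hy' : (0:ℝ) < y := hy
    rw [hf y, show y ^ (a + 2) = y ^ 2 * y ^ a by
      rw [Real.rpow_add hy', show (2:ℝ) = ((2:ℕ):ℝ) by norm_num, Real.rpow_natCast]; ring]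
    ring
  have hK_int : IntegrableOn
      (fun y : ℝ => (y ^ 2 * f y + 2 * (|Real.log y| * f y)) / Real.log 2) (Ioi 0) :=
    (hsq_f.add (habs_log_f.const_mul 2)).div_const _
  -- measurability
  have hmeas_f : AEStronglyMeasurable f (volume.restrict (Ioi 0)) := by
    have hcf : ContinuousOn f (Ioi 0) := by
      rw [funext hf]
      apply ContinuousOn.div_const
      refine ContinuousOn.mul (fun y hy => ?_) ((Real.continuous_exp.comp ((continuous_id.neg).div_const b)).continuousOn)
      exact (Real.continuousAt_rpow_const y a (Or.inl (ne_of_gt hy))).continuousWithinAt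
    exact hcf.aestronglyMeasurable measurableSet_Ioi
  have hFm : ∀ c : ℝ, AEStronglyMeasurable
      (fun y : ℝ => Real.logb 2 (1 + (c * y ^ 2)⁻¹) * f y) (volume.restrict (Ioi 0)) := by
    intro c
    refine AEStronglyMeasurable.mul ?_ hmeas_f
    refine Measurable.aestronglyMeasurable ?_
    have : (fun y : ℝ => Real.logb 2 (1 + (c * y ^ 2)⁻¹))
        = fun y : ℝ => Real.log (1 + (c * y ^ 2)⁻¹) / Real.log 2 := rfl
    rw [this]
    exact (Real.measurable_log.comp
      (measurable_const.add ((measurable_id.pow_const 2).const_mul c).inv)).div_const _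
  -- dominating function integrable
  have hlog2 : (0:ℝ) < Real.log 2 := Real.log_pos one_lt_two
  have hGle : ∀ y ∈ Ioi (0:ℝ), Real.logb 2 (1 + (1 * y ^ 2)⁻¹) * f y
      ≤ (y ^ 2 * f y + 2 * (|Real.log y| * f y)) / Real.log 2 := by
    intro y hy
    have hy' : (0:ℝ) < y := hy
    have h2 : (0:ℝ) < y ^ 2 := by positivity
    have hkey : Real.log (1 + (1 * y ^ 2)⁻¹) ≤ y ^ 2 + 2 * |Real.log y| := by
      have h1 : (1 + (1 * y ^ 2)⁻¹) = (1 + y ^ 2) / y ^ 2 := by field_simp; ring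
      rw [h1, Real.log_div (by positivity) h2.ne']
      have h2' := Real.log_le_sub_one_of_pos (show (0:ℝ) < 1 + y ^ 2 by positivity)
      have h3 : Real.log (y ^ 2) = 2 * Real.log y := by
        rw [Real.log_pow]; push_cast; ring
      rw [h3]
      have h4 := le_abs_self (Real.log y)
      have h5 := neg_abs_le (Real.log y)
      linarith
    have hdiv : Real.logb 2 (1 + (1 * y ^ 2)⁻¹)
        ≤ (y ^ 2 + 2 * |Real.log y|) / Real.log 2 := by
      rw [Real.logb]
      exact div_le_div_of_nonneg_right hkey hlog2.le |>.trans_eq rfl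
    calc Real.logb 2 (1 + (1 * y ^ 2)⁻¹) * f y
        ≤ (y ^ 2 + 2 * |Real.log y|) / Real.log 2 * f y :=
          mul_le_mul_of_nonneg_right hdiv (hfpos y hy)
      _ = (y ^ 2 * f y + 2 * (|Real.log y| * f y)) / Real.log 2 := by ring
  have hGnn : ∀ c : ℝ, 0 < c → ∀ y ∈ Ioi (0:ℝ),
      0 ≤ Real.logb 2 (1 + (c * y ^ 2)⁻¹) * f y := by
    intro c hc y hy
    have hy' : (0:ℝ) < y := hy
    have h0 : (0:ℝ) ≤ (c * y ^ 2)⁻¹ :=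
      inv_nonneg.mpr (mul_nonneg hc.le (by positivity))
    exact mul_nonneg (Real.logb_nonneg one_lt_two (by linarith)) (hfpos y hy)
  have hG_int : IntegrableOn (fun y : ℝ => Real.logb 2 (1 + (1 * y ^ 2)⁻¹) * f y) (Ioi 0) := by
    refine Integrable.mono' hK_int (hFm 1) ?_
    filter_upwards [ae_restrict_mem measurableSet_Ioi] with y hy
    rw [Real.norm_eq_abs, _root_.abs_of_nonneg (hGnn 1 one_pos y hy)]
    exact hGle y hy
  -- bound for ρ ≥ 1
  have hbd : ∀ ρ : ℝ, 1 ≤ ρ → ∀ y ∈ Ioi (0:ℝ),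
      ‖Real.logb 2 (1 + (ρ * y ^ 2)⁻¹) * f y‖
        ≤ Real.logb 2 (1 + (1 * y ^ 2)⁻¹) * f y := by
    intro ρ hρ y hy
    have hρ0 : (0:ℝ) < ρ := lt_of_lt_of_le one_pos hρ
    have hy' : (0:ℝ) < y := hy
    have h2 : (0:ℝ) < y ^ 2 := by positivity
    have hρy : (0:ℝ) < ρ * y ^ 2 := mul_pos hρ0 h2
    have h1y : (0:ℝ) < 1 * y ^ 2 := by positivity
    have hinv : (ρ * y ^ 2)⁻¹ ≤ (1 * y ^ 2)⁻¹ := by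
      apply inv_anti₀ h1y
      nlinarith
    have hainv : (0:ℝ) ≤ (ρ * y ^ 2)⁻¹ := (inv_pos.mpr hρy).le
    rw [Real.norm_eq_abs, _root_.abs_of_nonneg (hGnn ρ hρ0 y hy)]
    refine mul_le_mul_of_nonneg_right ?_ (hfpos y hy)
    exact (Real.logb_le_logb one_lt_two (by linarith) (by positivity)).mpr (by linarith)
  -- remainder tends to zero
  have hR : Tendsto (fun ρ : ℝ => ∫ y in Ioi (0:ℝ), Real.logb 2 (1 + (ρ * y ^ 2)⁻¹) * f y)
      atTop (𝓝 0) := by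
    have hlim : ∀ᵐ y ∂(volume.restrict (Ioi (0:ℝ))),
        Tendsto (fun ρ : ℝ => Real.logb 2 (1 + (ρ * y ^ 2)⁻¹) * f y) atTop (𝓝 0) := by
      filter_upwards [ae_restrict_mem measurableSet_Ioi] with y hy
      have hy' : (0:ℝ) < y := hy
      have t1 : Tendsto (fun ρ : ℝ => (ρ * y ^ 2)⁻¹) atTop (𝓝 0) :=
        (tendsto_id.atTop_mul_const (by positivity : (0:ℝ) < y ^ 2)).inv_tendsto_atTop
      have t2 : Tendsto (fun ρ : ℝ => 1 + (ρ * y ^ 2)⁻¹) atTop (𝓝 (1 + 0)) :=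
        tendsto_const_nhds.add t1
      rw [add_zero] at t2
      have t3 : ContinuousAt (Real.logb 2) 1 :=
        (Real.continuousAt_log one_ne_zero).div_const _
      have t4 := (t3.tendsto.comp (t2 : Tendsto (fun ρ : ℝ => 1 + (ρ * y ^ 2)⁻¹) atTop (𝓝 1))).mul_const (f y)
      simpa using t4
    have := MeasureTheory.tendsto_integral_filter_of_dominated_convergence
      (μ := volume.restrict (Ioi (0:ℝ)))
      (F := fun (ρ : ℝ) (y : ℝ) => Real.logb 2 (1 + (ρ * y ^ 2)⁻¹) * f y)
      (f := fun _ : ℝ => (0:ℝ))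
      (bound := fun y => Real.logb 2 (1 + (1 * y ^ 2)⁻¹) * f y)
      (Filter.Eventually.of_forall hFm)
      (by
        filter_upwards [eventually_ge_atTop (1:ℝ)] with ρ hρ
        filter_upwards [ae_restrict_mem measurableSet_Ioi] with y hy
        exact hbd ρ hρ y hy)
      hG_int hlim
    simpa using this
  -- main eventual identity
  have hmain : ∀ ρ : ℝ, 1 ≤ ρ →
      (∫ y in Ioi (0:ℝ), Real.logb 2 (1 + ρ * y ^ 2) * f y) - Real.logb 2 (b ^ 2 * ρ)
        = 2 / Real.log 2 * (deriv Real.Gamma (a + 1) / Real.Gamma (a + 1))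
          + ∫ y in Ioi (0:ℝ), Real.logb 2 (1 + (ρ * y ^ 2)⁻¹) * f y := by
    intro ρ hρ
    have hρ0 : (0:ℝ) < ρ := lt_of_lt_of_le one_pos hρ
    have i1 : IntegrableOn (fun y : ℝ => Real.logb 2 ρ * f y) (Ioi 0) := hf_int.const_mul _
    have i2 : IntegrableOn (fun y : ℝ => 2 / Real.log 2 * (Real.log y * f y)) (Ioi 0) :=
      hlog_f_int.const_mul _
    have i12 : IntegrableOn (fun y : ℝ => Real.logb 2 ρ * f y
        + 2 / Real.log 2 * (Real.log y * f y)) (Ioi 0) := i1.add i2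
    have i3 : IntegrableOn (fun y : ℝ => Real.logb 2 (1 + (ρ * y ^ 2)⁻¹) * f y) (Ioi 0) := by
      refine Integrable.mono' hG_int (hFm ρ) ?_
      filter_upwards [ae_restrict_mem measurableSet_Ioi] with y hy
      exact hbd ρ hρ y hy
    have hsplit : (∫ y in Ioi (0:ℝ), Real.logb 2 (1 + ρ * y ^ 2) * f y)
        = ∫ y in Ioi (0:ℝ), ((Real.logb 2 ρ * f y + 2 / Real.log 2 * (Real.log y * f y))
            + Real.logb 2 (1 + (ρ * y ^ 2)⁻¹) * f y) := by
      refine setIntegral_congr_fun measurableSet_Ioi fun y hy => ?_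
      have hy' : (0:ℝ) < y := hy
      have hxy : (0:ℝ) < ρ * y ^ 2 := by positivity
      have hxi : (0:ℝ) < 1 + (ρ * y ^ 2)⁻¹ := by
        have := inv_pos.mpr hxy
        linarith
      have hdec : (1 + ρ * y ^ 2) = ρ * (y ^ 2) * (1 + (ρ * y ^ 2)⁻¹) := by
        field_simp
        ring
      rw [hdec, Real.logb_mul (by positivity) hxi.ne',
        Real.logb_mul hρ0.ne' (by positivity)]
      have hy2 : Real.logb 2 (y ^ 2) = 2 * Real.log y / Real.log 2 := by
        rw [Real.logb, Real.log_pow]; push_cast; ring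
      rw [hy2]
      ring
    have hlogb : Real.logb 2 (b ^ 2 * ρ) = 2 * Real.log b / Real.log 2 + Real.logb 2 ρ := by
      rw [Real.logb_mul (by positivity) hρ0.ne']
      have hb2 : Real.logb 2 (b ^ 2) = 2 * Real.log b / Real.log 2 := by
        rw [Real.logb, Real.log_pow]; push_cast; ring
      rw [hb2]
    rw [hsplit, integral_add i12 i3, integral_add i1 i2, integral_const_mul,
      integral_const_mul, hf_one, part1, hlogb]
    ring
  -- conclude
  have hconst : Tendsto (fun ρ : ℝ =>
      2 / Real.log 2 * (deriv Real.Gamma (a + 1) / Real.Gamma (a + 1))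
        + ∫ y in Ioi (0:ℝ), Real.logb 2 (1 + (ρ * y ^ 2)⁻¹) * f y) atTop
      (𝓝 (2 / Real.log 2 * (deriv Real.Gamma (a + 1) / Real.Gamma (a + 1)))) := by
    have h := (tendsto_const_nhds (x := 2 / Real.log 2 *
      (deriv Real.Gamma (a + 1) / Real.Gamma (a + 1)))).add hR
    rw [add_zero] at h
    exact h
  refine hconst.congr' ?_
  filter_upwards [eventually_ge_atTop (1:ℝ)] with ρ hρ
  exact (hmain ρ hρ).symm
end

section
/- Fix ρ > 0. For each integer N ≥ 1, let k₁(N) = Nπ/2, k₂(N) = 4N(1 − π²/16), a(N) = k₁(N)²/k₂(N) − 1, b = k₂(N)/k₁(N) (which is independent of N), and define the ergodic capacity C(N) = ∫_0^∞ log₂(1 + ρ y²) · y^{a(N)} e^{−y/b}/(b^{a(N)+1} Γ(a(N)+1)) dy. Then lim_{N→∞} ( C(2N) − C(N) ) = 2; that is, asymptotically, doubling the number of reflection units increases the ergodic capacity by 2 bits/s/Hz. -/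
open Real MeasureTheory Set Filter Topology

private lemma gamma_integral_aux {q B : ℝ} (hq : -1 < q) (hB : 0 < B) :
    ∫ y in Ioi (0:ℝ), y ^ q * Real.exp (-y / B) = B ^ (q + 1) * Real.Gamma (q + 1) := by
  have h := integral_rpow_mul_exp_neg_mul_rpow (p := 1) (q := q) (b := B⁻¹) one_pos hq
    (inv_pos.2 hB)
  simp only [Real.rpow_one, div_one] at h
  have h2 : ∀ y : ℝ, -B⁻¹ * y = -y / B := fun y => by field_simp
  simp_rw [h2] at h
  rw [h, Real.inv_rpow hB.le, ← Real.rpow_neg hB.le, neg_neg]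
  ring

private lemma gamma_integrable_aux {q B : ℝ} (hq : -1 < q) (hB : 0 < B) :
    IntegrableOn (fun y : ℝ => y ^ q * Real.exp (-y / B)) (Ioi 0) := by
  have h := integrableOn_rpow_mul_exp_neg_mul_rpow (p := 1) hq one_pos (inv_pos.2 hB)
  refine h.congr_fun (fun y hy => ?_) measurableSet_Ioi
  simp only [Real.rpow_one]
  congr 1
  field_simp

private lemma moment_aux {B α : ℝ} (q : ℝ) (hB : 0 < B) (hαq : 0 < α + q) (hα0 : 0 < α) :
    ∫ y in Ioi (0:ℝ), y ^ q * (y ^ (α - 1) * Real.exp (-y / B) / (B ^ α * Real.Gamma α)) =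
      B ^ q * Real.Gamma (α + q) / Real.Gamma α := by
  have hΓ : 0 < Real.Gamma α := Real.Gamma_pos_of_pos hα0
  have hBα : (0:ℝ) < B ^ α := Real.rpow_pos_of_pos hB α
  have h1 : ∀ y ∈ Ioi (0:ℝ),
      y ^ q * (y ^ (α - 1) * Real.exp (-y / B) / (B ^ α * Real.Gamma α)) =
      y ^ (α + q - 1) * Real.exp (-y / B) / (B ^ α * Real.Gamma α) := by
    intro y hy
    rw [show α + q - 1 = q + (α - 1) by ring, Real.rpow_add hy]
    ring
  rw [setIntegral_congr_fun measurableSet_Ioi h1, integral_div,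
    gamma_integral_aux (by linarith) hB, show α + q - 1 + 1 = α + q by ring,
    Real.rpow_add hB]
  field_simp

private lemma moment_int_aux {B α : ℝ} (q : ℝ) (hB : 0 < B) (hαq : 0 < α + q) :
    IntegrableOn (fun y : ℝ =>
      y ^ q * (y ^ (α - 1) * Real.exp (-y / B) / (B ^ α * Real.Gamma α))) (Ioi 0) := by
  have h : IntegrableOn (fun y : ℝ => y ^ (α + q - 1) * Real.exp (-y / B) /
      (B ^ α * Real.Gamma α)) (Ioi 0) :=
    (gamma_integrable_aux (q := α + q - 1) (by linarith) hB).div_const (B ^ α * Real.Gamma α)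
  refine h.congr_fun (fun y hy => ?_) measurableSet_Ioi
  rw [show α + q - 1 = q + (α - 1) by ring]; beta_reduce; rw [Real.rpow_add hy]
  ring

private lemma gf_meas {ρ B α : ℝ} :
    Measurable (fun y : ℝ => Real.log (1 + ρ * y ^ 2) *
      (y ^ (α - 1) * Real.exp (-y / B) / (B ^ α * Real.Gamma α))) := by
  have h1 : Measurable (fun y : ℝ => Real.log (1 + ρ * y ^ 2)) :=
    ((measurable_const.add ((measurable_id'.pow_const 2).const_mul ρ))).log
  exact h1.mul (((measurable_id'.pow_const (α - 1)).mul
    (measurable_id'.neg.div_const B).exp).div_const _)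

private lemma gf_integrable {ρ B α : ℝ} (hρ : 0 < ρ) (hB : 0 < B) (hα0 : 0 < α) :
    IntegrableOn (fun y : ℝ => Real.log (1 + ρ * y ^ 2) *
      (y ^ (α - 1) * Real.exp (-y / B) / (B ^ α * Real.Gamma α))) (Ioi 0) := by
  have hmaj : IntegrableOn (fun y : ℝ =>
      ρ * (y ^ (2:ℝ) * (y ^ (α - 1) * Real.exp (-y / B) / (B ^ α * Real.Gamma α)))) (Ioi 0) :=
    (moment_int_aux 2 hB (by linarith)).const_mul ρ
  refine Integrable.mono' hmaj gf_meas.aestronglyMeasurable ?_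
  refine (ae_restrict_iff' measurableSet_Ioi).2 (ae_of_all _ (fun y hy => ?_))
  have hy0 : (0:ℝ) < y := hy
  have hfpos : 0 ≤ y ^ (α - 1) * Real.exp (-y / B) / (B ^ α * Real.Gamma α) := by
    have := Real.Gamma_pos_of_pos hα0
    have := Real.rpow_pos_of_pos hB α
    positivity
  have hg0 : 0 ≤ Real.log (1 + ρ * y ^ 2) := by
    apply Real.log_nonneg; nlinarith
  rw [Real.norm_eq_abs, abs_of_nonneg (mul_nonneg hg0 hfpos)]
  have hgle : Real.log (1 + ρ * y ^ 2) ≤ ρ * y ^ (2:ℝ) := by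
    have h2 : y ^ (2:ℝ) = y ^ 2 := by
      rw [show (2:ℝ) = ((2:ℕ):ℝ) by norm_num, Real.rpow_natCast]
    rw [h2]
    have := Real.log_le_sub_one_of_pos (show (0:ℝ) < 1 + ρ * y ^ 2 by positivity)
    linarith
  calc Real.log (1 + ρ * y ^ 2) * (y ^ (α - 1) * Real.exp (-y / B) / (B ^ α * Real.Gamma α))
      ≤ ρ * y ^ (2:ℝ) * (y ^ (α - 1) * Real.exp (-y / B) / (B ^ α * Real.Gamma α)) :=
        mul_le_mul_of_nonneg_right hgle hfpos
    _ = ρ * (y ^ (2:ℝ) * (y ^ (α - 1) * Real.exp (-y / B) / (B ^ α * Real.Gamma α))) := by ring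

private lemma cap_upper {ρ B α : ℝ} (hρ : 0 < ρ) (hB : 0 < B) (hα : 3 ≤ α) :
    (∫ y in Ioi (0:ℝ), Real.log (1 + ρ * y ^ 2) *
        (y ^ (α - 1) * Real.exp (-y / B) / (B ^ α * Real.Gamma α))) ≤
      Real.log ρ + 2 * Real.log (B * α) + 1 / (ρ * B ^ 2 * ((α - 1) * (α - 2))) := by
  have hα0 : (0:ℝ) < α := by linarith
  set c₀ : ℝ := Real.log ρ + 2 * Real.log (B * α) - 2 with hc₀
  have hint0 := moment_int_aux (B := B) (α := α) 0 hB (by linarith)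
  have hint1 := moment_int_aux (B := B) (α := α) 1 hB (by linarith)
  have hint2 := moment_int_aux (B := B) (α := α) (-2) hB (by linarith)
  have hA : IntegrableOn (fun y : ℝ =>
      c₀ * (y ^ (0:ℝ) * (y ^ (α - 1) * Real.exp (-y / B) / (B ^ α * Real.Gamma α)))) (Ioi 0) :=
    hint0.const_mul c₀
  have hA1 : IntegrableOn (fun y : ℝ =>
      (2 / (B * α)) * (y ^ (1:ℝ) * (y ^ (α - 1) * Real.exp (-y / B) / (B ^ α * Real.Gamma α))))
      (Ioi 0) := hint1.const_mul _
  have hA2 : IntegrableOn (fun y : ℝ =>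
      ρ⁻¹ * (y ^ (-2:ℝ) * (y ^ (α - 1) * Real.exp (-y / B) / (B ^ α * Real.Gamma α))))
      (Ioi 0) := hint2.const_mul _
  have hA01 : IntegrableOn (fun y : ℝ =>
      c₀ * (y ^ (0:ℝ) * (y ^ (α - 1) * Real.exp (-y / B) / (B ^ α * Real.Gamma α))) +
      (2 / (B * α)) * (y ^ (1:ℝ) * (y ^ (α - 1) * Real.exp (-y / B) / (B ^ α * Real.Gamma α))))
      (Ioi 0) := hA.add hA1
  have hUint : IntegrableOn (fun y : ℝ =>
      c₀ * (y ^ (0:ℝ) * (y ^ (α - 1) * Real.exp (-y / B) / (B ^ α * Real.Gamma α))) +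
      (2 / (B * α)) * (y ^ (1:ℝ) * (y ^ (α - 1) * Real.exp (-y / B) / (B ^ α * Real.Gamma α))) +
      ρ⁻¹ * (y ^ (-2:ℝ) * (y ^ (α - 1) * Real.exp (-y / B) / (B ^ α * Real.Gamma α))))
      (Ioi 0) := hA01.add hA2
  have hle : ∀ y ∈ Ioi (0:ℝ), Real.log (1 + ρ * y ^ 2) *
      (y ^ (α - 1) * Real.exp (-y / B) / (B ^ α * Real.Gamma α)) ≤
      c₀ * (y ^ (0:ℝ) * (y ^ (α - 1) * Real.exp (-y / B) / (B ^ α * Real.Gamma α))) +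
      (2 / (B * α)) * (y ^ (1:ℝ) * (y ^ (α - 1) * Real.exp (-y / B) / (B ^ α * Real.Gamma α))) +
      ρ⁻¹ * (y ^ (-2:ℝ) * (y ^ (α - 1) * Real.exp (-y / B) / (B ^ α * Real.Gamma α))) := by
    intro y hy
    have hy0 : (0:ℝ) < y := hy
    have hfpos : 0 ≤ y ^ (α - 1) * Real.exp (-y / B) / (B ^ α * Real.Gamma α) := by
      have := Real.Gamma_pos_of_pos hα0
      have := Real.rpow_pos_of_pos hB α
      positivity
    have hu : (0:ℝ) < ρ * y ^ 2 := by positivity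
    have hm : (0:ℝ) < B * α := by positivity
    have e1 : Real.log (1 + ρ * y ^ 2) = Real.log (ρ * y ^ 2)
        + Real.log (1 + (ρ * y ^ 2)⁻¹) := by
      rw [← Real.log_mul hu.ne' (by positivity)]
      congr 1; field_simp; ring
    have e2 : Real.log (1 + (ρ * y ^ 2)⁻¹) ≤ (ρ * y ^ 2)⁻¹ := by
      have := Real.log_le_sub_one_of_pos (show (0:ℝ) < 1 + (ρ * y ^ 2)⁻¹ by positivity)
      linarith
    have e3 : Real.log (ρ * y ^ 2) = Real.log ρ + 2 * Real.log y := by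
      rw [Real.log_mul hρ.ne' (by positivity), Real.log_pow]; norm_num
    have e4 : Real.log y ≤ Real.log (B * α) + y / (B * α) - 1 := by
      have h := Real.log_le_sub_one_of_pos (show (0:ℝ) < y / (B * α) by positivity)
      rw [Real.log_div hy0.ne' hm.ne'] at h
      linarith
    have e5 : (ρ * y ^ 2)⁻¹ = ρ⁻¹ * y ^ (-2:ℝ) := by
      have h7 : y ^ (-2:ℝ) = (y ^ 2)⁻¹ := by
        rw [show (-2:ℝ) = -((2:ℕ):ℝ) by norm_num, Real.rpow_neg hy0.le, Real.rpow_natCast]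
      rw [h7, mul_inv]
    have key : Real.log (1 + ρ * y ^ 2) ≤ c₀ + (2 / (B * α)) * y + ρ⁻¹ * y ^ (-2:ℝ) := by
      rw [hc₀]
      have h6 : (2 / (B * α)) * y = 2 * (y / (B * α)) := by ring
      rw [h6, ← e5]
      linarith
    calc Real.log (1 + ρ * y ^ 2) * (y ^ (α - 1) * Real.exp (-y / B) / (B ^ α * Real.Gamma α))
        ≤ (c₀ + (2 / (B * α)) * y + ρ⁻¹ * y ^ (-2:ℝ)) *
            (y ^ (α - 1) * Real.exp (-y / B) / (B ^ α * Real.Gamma α)) :=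
          mul_le_mul_of_nonneg_right key hfpos
      _ = _ := by simp only [Real.rpow_zero, Real.rpow_one]; ring
  have hmono := setIntegral_mono_on (gf_integrable hρ hB hα0) hUint measurableSet_Ioi hle
  refine hmono.trans (le_of_eq ?_)
  have hΓ : 0 < Real.Gamma α := Real.Gamma_pos_of_pos hα0
  have hΓ2 : 0 < Real.Gamma (α - 2) := Real.Gamma_pos_of_pos (by linarith)
  have hg1 : Real.Gamma (α - 1) = (α - 2) * Real.Gamma (α - 2) := by
    rw [show α - 1 = (α - 2) + 1 by ring, Real.Gamma_add_one (by linarith : α - 2 ≠ 0)]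
  have hg2' : Real.Gamma α = (α - 1) * Real.Gamma (α - 1) := by
    nth_rewrite 1 [show α = (α - 1) + 1 by ring]
    exact Real.Gamma_add_one (by linarith)
  have hg2 : Real.Gamma α = (α - 1) * ((α - 2) * Real.Gamma (α - 2)) := by
    rw [hg2', hg1]
  have hg3 : Real.Gamma (α + 1) = α * Real.Gamma α := Real.Gamma_add_one hα0.ne'
  have hB2 : B ^ (-2:ℝ) = (B ^ 2)⁻¹ := by
    rw [show (-2:ℝ) = ((-2:ℤ):ℝ) by norm_num, Real.rpow_intCast, zpow_neg, zpow_two, pow_two]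
  have hΓne : Real.Gamma α ≠ 0 := hΓ.ne'
  have m0 : B ^ (0:ℝ) * Real.Gamma α / Real.Gamma α = 1 := by
    rw [Real.rpow_zero]; field_simp
  have m1 : B ^ (1:ℝ) * Real.Gamma (α + 1) / Real.Gamma α = B * α := by
    rw [Real.rpow_one, hg3]; field_simp
  have m2 : B ^ (-2:ℝ) * Real.Gamma (α - 2) / Real.Gamma α
      = 1 / (B ^ 2 * ((α - 1) * (α - 2))) := by
    rw [hB2, hg2]
    set G := Real.Gamma (α - 2) with hG
    have hGne : G ≠ 0 := hΓ2.ne'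
    have hr : (α - 1) * ((α - 2) * G) = ((α - 1) * (α - 2)) * G := by ring
    rw [hr, mul_div_mul_right _ _ hGne]
    have h1 : (α - 1 : ℝ) ≠ 0 := by linarith
    have h2 : (α - 2 : ℝ) ≠ 0 := by linarith
    field_simp
  have t2 : ρ⁻¹ * (1 / (B ^ 2 * ((α - 1) * (α - 2)))) = 1 / (ρ * B ^ 2 * ((α - 1) * (α - 2))) := by
    field_simp
  rw [integral_add hA01 hA2, integral_add hA hA1,
    integral_const_mul, integral_const_mul, integral_const_mul,
    moment_aux 0 hB (by linarith) hα0, moment_aux 1 hB (by linarith) hα0,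
    moment_aux (-2) hB (by linarith) hα0,
    show α + 0 = α by ring, show α + -2 = α - 2 by ring,
    m0, m1, m2, t2, hc₀]
  have t1 : 2 / (B * α) * (B * α) = 2 := by field_simp
  rw [t1]
  ring

private lemma cap_lower {ρ B α : ℝ} (hρ : 0 < ρ) (hB : 0 < B) (hα : 3 ≤ α) :
    Real.log ρ + 2 * Real.log (B * (α - 1)) ≤
      ∫ y in Ioi (0:ℝ), Real.log (1 + ρ * y ^ 2) *
        (y ^ (α - 1) * Real.exp (-y / B) / (B ^ α * Real.Gamma α)) := by
  have hα0 : (0:ℝ) < α := by linarith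
  have hm : (0:ℝ) < B * (α - 1) := by
    have : (0:ℝ) < α - 1 := by linarith
    positivity
  set c₁ : ℝ := Real.log ρ + 2 * Real.log (B * (α - 1)) + 2 with hc₁
  have hint0 := moment_int_aux (B := B) (α := α) 0 hB (by linarith)
  have hintm1 := moment_int_aux (B := B) (α := α) (-1) hB (by linarith)
  have hA : IntegrableOn (fun y : ℝ =>
      c₁ * (y ^ (0:ℝ) * (y ^ (α - 1) * Real.exp (-y / B) / (B ^ α * Real.Gamma α)))) (Ioi 0) :=
    hint0.const_mul c₁
  have hAm : IntegrableOn (fun y : ℝ =>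
      (2 * (B * (α - 1))) * (y ^ (-1:ℝ) * (y ^ (α - 1) * Real.exp (-y / B) /
        (B ^ α * Real.Gamma α)))) (Ioi 0) := hintm1.const_mul _
  have hLint : IntegrableOn (fun y : ℝ =>
      c₁ * (y ^ (0:ℝ) * (y ^ (α - 1) * Real.exp (-y / B) / (B ^ α * Real.Gamma α))) -
      (2 * (B * (α - 1))) * (y ^ (-1:ℝ) * (y ^ (α - 1) * Real.exp (-y / B) /
        (B ^ α * Real.Gamma α)))) (Ioi 0) := hA.sub hAm
  have hle : ∀ y ∈ Ioi (0:ℝ),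
      c₁ * (y ^ (0:ℝ) * (y ^ (α - 1) * Real.exp (-y / B) / (B ^ α * Real.Gamma α))) -
      (2 * (B * (α - 1))) * (y ^ (-1:ℝ) * (y ^ (α - 1) * Real.exp (-y / B) /
        (B ^ α * Real.Gamma α))) ≤
      Real.log (1 + ρ * y ^ 2) *
        (y ^ (α - 1) * Real.exp (-y / B) / (B ^ α * Real.Gamma α)) := by
    intro y hy
    have hy0 : (0:ℝ) < y := hy
    have hfpos : 0 ≤ y ^ (α - 1) * Real.exp (-y / B) / (B ^ α * Real.Gamma α) := by
      have := Real.Gamma_pos_of_pos hα0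
      have := Real.rpow_pos_of_pos hB α
      positivity
    have hu : (0:ℝ) < ρ * y ^ 2 := by positivity
    have hinv : y ^ (-1:ℝ) = y⁻¹ := by
      rw [show (-1:ℝ) = -((1:ℕ):ℝ) by norm_num, Real.rpow_neg hy0.le, Real.rpow_natCast,
        pow_one]
    have e3 : Real.log (ρ * y ^ 2) = Real.log ρ + 2 * Real.log y := by
      rw [Real.log_mul hρ.ne' (by positivity), Real.log_pow]; norm_num
    have e6 : Real.log (ρ * y ^ 2) ≤ Real.log (1 + ρ * y ^ 2) :=
      Real.log_le_log hu (by linarith)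
    have e7 : Real.log (B * (α - 1)) - Real.log y ≤ (B * (α - 1)) * y⁻¹ - 1 := by
      have h := Real.log_le_sub_one_of_pos (show (0:ℝ) < (B * (α - 1)) / y by positivity)
      rw [Real.log_div hm.ne' hy0.ne'] at h
      rw [div_eq_mul_inv] at h
      linarith
    have key : c₁ - (2 * (B * (α - 1))) * y ^ (-1:ℝ) ≤ Real.log (1 + ρ * y ^ 2) := by
      rw [hc₁, hinv]
      nlinarith [e3, e6, e7]
    calc c₁ * (y ^ (0:ℝ) * (y ^ (α - 1) * Real.exp (-y / B) / (B ^ α * Real.Gamma α))) -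
        (2 * (B * (α - 1))) * (y ^ (-1:ℝ) * (y ^ (α - 1) * Real.exp (-y / B) /
          (B ^ α * Real.Gamma α)))
        = (c₁ - (2 * (B * (α - 1))) * y ^ (-1:ℝ)) *
            (y ^ (α - 1) * Real.exp (-y / B) / (B ^ α * Real.Gamma α)) := by
          simp only [Real.rpow_zero]; ring
      _ ≤ _ := mul_le_mul_of_nonneg_right key hfpos
  have hmono := setIntegral_mono_on hLint (gf_integrable hρ hB hα0) measurableSet_Ioi hle
  refine le_trans (le_of_eq ?_) hmono
  have hΓ : 0 < Real.Gamma α := Real.Gamma_pos_of_pos hα0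
  have hΓ1 : 0 < Real.Gamma (α - 1) := Real.Gamma_pos_of_pos (by linarith)
  have hΓne : Real.Gamma α ≠ 0 := hΓ.ne'
  have hg2' : Real.Gamma α = (α - 1) * Real.Gamma (α - 1) := by
    nth_rewrite 1 [show α = (α - 1) + 1 by ring]
    exact Real.Gamma_add_one (by linarith)
  have m0 : B ^ (0:ℝ) * Real.Gamma α / Real.Gamma α = 1 := by
    rw [Real.rpow_zero]; field_simp
  have mm1 : B ^ (-1:ℝ) * Real.Gamma (α - 1) / Real.Gamma α = 1 / (B * (α - 1)) := by
    have hBinv : B ^ (-1:ℝ) = B⁻¹ := by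
      rw [show (-1:ℝ) = -((1:ℕ):ℝ) by norm_num, Real.rpow_neg hB.le, Real.rpow_natCast,
        pow_one]
    rw [hBinv, hg2']
    set G := Real.Gamma (α - 1) with hG
    have hGne : G ≠ 0 := hΓ1.ne'
    have hr : (α - 1) * G = G * (α - 1) := by ring
    have h1 : (α - 1 : ℝ) ≠ 0 := by linarith
    field_simp
  rw [integral_sub hA hAm, integral_const_mul, integral_const_mul,
    moment_aux 0 hB (by linarith) hα0, moment_aux (-1) hB (by linarith) hα0,
    show α + 0 = α by ring, show α + -1 = α - 1 by ring, m0, mm1, hc₁]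
  have t1 : 2 * (B * (α - 1)) * (1 / (B * (α - 1))) = 2 := by
    field_simp
    exact div_self (by linarith)
  rw [t1]
  ring

/-- Fix a transmit SNR `ρ > 0`. For each `N ≥ 1` let `k₁ N = N π / 2`,
`k₂ N = 4 N (1 - π²/16)`, `a N = (k₁ N)² / k₂ N - 1`, and let `b = k₂ N / k₁ N` (which is
independent of `N`). With the ergodic capacity
`C N = ∫ y in (0,∞), log₂ (1 + ρ y²) * y^(a N) e^(-y/b) / (b^(a N + 1) Γ(a N + 1)) dy`,
doubling the number of reflection units asymptotically adds 2 bits/s/Hz: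
`lim_{N→∞} (C (2 N) - C N) = 2`. -/
theorem ergodic_capacity_doubling_gain (ρ : ℝ) (hρ : 0 < ρ)
    (k₁ k₂ a : ℕ → ℝ) (b : ℝ)
    (hk₁ : ∀ N : ℕ, k₁ N = N * π / 2)
    (hk₂ : ∀ N : ℕ, k₂ N = 4 * N * (1 - π ^ 2 / 16))
    (ha : ∀ N : ℕ, a N = (k₁ N) ^ 2 / k₂ N - 1)
    (hb : ∀ N : ℕ, 1 ≤ N → b = k₂ N / k₁ N)
    (C : ℕ → ℝ)
    (hC : ∀ N : ℕ, C N = ∫ y in Ioi (0 : ℝ),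
      Real.logb 2 (1 + ρ * y ^ 2) *
        (y ^ a N * Real.exp (-y / b) / (b ^ (a N + 1) * Real.Gamma (a N + 1)))) :
    Tendsto (fun N : ℕ => C (2 * N) - C N) atTop (𝓝 2) := by
  have hπ3 : 3 < π := Real.pi_gt_three
  have hπ4 : π < 3.15 := Real.pi_lt_d2
  have hπ16 : π ^ 2 < 16 := by nlinarith
  have hπ8 : 8 < π ^ 2 := by nlinarith
  have hπ0 : 0 < π := by linarith
  set c : ℝ := π ^ 2 / (16 - π ^ 2) with hc_def
  have hc1 : 1 < c := by
    rw [hc_def, lt_div_iff₀ (by linarith)]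
    nlinarith
  have hc : 0 < c := by linarith
  have hbpos : 0 < b := by
    rw [hb 1 le_rfl, hk₁ 1, hk₂ 1]
    push_cast
    apply div_pos <;> nlinarith
  -- a N + 1 = c * N for N ≥ 1
  have hαN : ∀ N : ℕ, 1 ≤ N → a N + 1 = c * N := by
    intro N hN
    have hN0 : (N:ℝ) ≠ 0 := Nat.cast_ne_zero.2 (by omega)
    rw [ha, hk₁, hk₂, hc_def]
    have h16 : (16:ℝ) - π ^ 2 ≠ 0 := by linarith
    field_simp
    ring
  set L : ℕ → ℝ := fun N => ∫ y in Ioi (0:ℝ), Real.log (1 + ρ * y ^ 2) *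
      (y ^ a N * Real.exp (-y / b) / (b ^ (a N + 1) * Real.Gamma (a N + 1))) with hL
  have hCL : ∀ N, C N = L N / Real.log 2 := by
    intro N
    rw [hC, hL]
    simp_rw [Real.logb, div_mul_eq_mul_div]
    rw [integral_div]
  -- bounds
  have hbound : ∀ N : ℕ, 3 ≤ N →
      Real.log ρ + 2 * Real.log (b * (c * N - 1)) ≤ L N ∧
      L N ≤ Real.log ρ + 2 * Real.log (b * (c * N)) +
        1 / (ρ * b ^ 2 * ((c * N - 1) * (c * N - 2))) := by
    intro N h3
    have h1 : a N + 1 = c * N := hαN N (by omega)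
    have hN3 : (3:ℝ) ≤ (N:ℝ) := by exact_mod_cast h3
    have hα3 : 3 ≤ c * N := by nlinarith
    have haN : a N = c * N - 1 := by linarith
    have hLeq : L N = ∫ y in Ioi (0:ℝ), Real.log (1 + ρ * y ^ 2) *
        (y ^ (c * N - 1) * Real.exp (-y / b) / (b ^ (c * N) * Real.Gamma (c * N))) := by
      simp only [hL]
      simp_rw [h1, haN]
    rw [hLeq]
    exact ⟨cap_lower hρ hbpos hα3, cap_upper hρ hbpos hα3⟩
  have ht : Tendsto (fun N : ℕ => c * (N:ℝ)) atTop atTop :=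
    tendsto_natCast_atTop_atTop.const_mul_atTop hc
  -- squeeze inequalities
  have hsq_lo : ∀ᶠ N : ℕ in atTop,
      (2 * Real.log (b * (2 * (c * N) - 1)) - 2 * Real.log (b * (c * N))) -
        1 / (ρ * b ^ 2 * ((c * N - 1) * (c * N - 2))) ≤ L (2 * N) - L N := by
    filter_upwards [eventually_ge_atTop 3] with N h3
    have h2N : c * ((2 * N : ℕ):ℝ) = 2 * (c * N) := by push_cast; ring
    have hlo := (hbound (2 * N) (by omega)).1
    have hhi := (hbound N h3).2
    rw [h2N] at hlo
    linarith
  have hsq_hi : ∀ᶠ N : ℕ in atTop,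
      L (2 * N) - L N ≤ (2 * Real.log (b * (2 * (c * N))) - 2 * Real.log (b * (c * N - 1))) +
        1 / (ρ * b ^ 2 * ((2 * (c * N) - 1) * (2 * (c * N) - 2))) := by
    filter_upwards [eventually_ge_atTop 3] with N h3
    have h2N : c * ((2 * N : ℕ):ℝ) = 2 * (c * N) := by push_cast; ring
    have hhi := (hbound (2 * N) (by omega)).2
    have hlo := (hbound N h3).1
    rw [h2N] at hhi
    linarith
  -- eventual bound c * N ≥ 3
  have hev3 : ∀ᶠ N : ℕ in atTop, (3:ℝ) ≤ c * N := by
    filter_upwards [eventually_ge_atTop 3] with N h3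
    have hN3 : (3:ℝ) ≤ (N:ℝ) := by exact_mod_cast h3
    nlinarith
  -- lower limit
  have hinv0 : Tendsto (fun N : ℕ => 1 / (c * N)) atTop (𝓝 0) := by
    simp_rw [one_div]
    exact tendsto_inv_atTop_zero.comp ht
  have h2t : Tendsto (fun N : ℕ => 2 - 1 / (c * N)) atTop (𝓝 2) := by
    have := (tendsto_const_nhds : Tendsto (fun _ : ℕ => (2:ℝ)) atTop (𝓝 2)).sub hinv0
    simpa using this
  have hlog2t : Tendsto (fun N : ℕ => Real.log (2 - 1 / (c * N))) atTop (𝓝 (Real.log 2)) :=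
    ((Real.continuousAt_log two_ne_zero).tendsto).comp h2t
  have hden_lo : Tendsto (fun N : ℕ => ρ * b ^ 2 * ((c * N - 1) * (c * N - 2))) atTop atTop := by
    have h1 : Tendsto (fun N : ℕ => c * (N:ℝ) - 1) atTop atTop := by
      simpa [sub_eq_add_neg] using tendsto_atTop_add_const_right atTop (-1 : ℝ) ht
    have h2 : Tendsto (fun N : ℕ => c * (N:ℝ) - 2) atTop atTop := by
      simpa [sub_eq_add_neg] using tendsto_atTop_add_const_right atTop (-2 : ℝ) ht
    exact (h1.atTop_mul_atTop₀ h2).const_mul_atTop (by positivity)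
  have hzero_lo : Tendsto (fun N : ℕ => 1 / (ρ * b ^ 2 * ((c * N - 1) * (c * N - 2))))
      atTop (𝓝 0) := by
    simp_rw [one_div]
    exact tendsto_inv_atTop_zero.comp hden_lo
  have hlim_lo : Tendsto (fun N : ℕ =>
      (2 * Real.log (b * (2 * (c * N) - 1)) - 2 * Real.log (b * (c * N))) -
        1 / (ρ * b ^ 2 * ((c * N - 1) * (c * N - 2)))) atTop (𝓝 (2 * Real.log 2)) := by
    have hA : Tendsto (fun N : ℕ => 2 * Real.log (2 - 1 / (c * N)) -
        1 / (ρ * b ^ 2 * ((c * N - 1) * (c * N - 2)))) atTop (𝓝 (2 * Real.log 2)) := by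
      have := (hlog2t.const_mul 2).sub hzero_lo
      simpa using this
    refine Tendsto.congr' ?_ hA
    filter_upwards [hev3] with N h3
    set t := c * (N:ℝ) with htdef
    have ht0 : (0:ℝ) < t := by linarith
    have hfac : b * (2 * t - 1) = (b * t) * (2 - 1 / t) := by field_simp
    have hpos1 : (0:ℝ) < b * t := by positivity
    have hpos2 : (0:ℝ) < 2 - 1 / t := by
      have : 1 / t ≤ 1 / 3 := by
        apply div_le_div_of_nonneg_left <;> linarith
      linarith
    rw [hfac, Real.log_mul hpos1.ne' hpos2.ne']
    ring
  -- upper limit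
  have htm1 : Tendsto (fun N : ℕ => c * (N:ℝ) - 1) atTop atTop := by
    simpa [sub_eq_add_neg] using tendsto_atTop_add_const_right atTop (-1 : ℝ) ht
  have hinv1 : Tendsto (fun N : ℕ => 2 / (c * N - 1)) atTop (𝓝 0) := by
    simp_rw [div_eq_mul_inv]
    have := (tendsto_inv_atTop_zero.comp htm1).const_mul (2:ℝ)
    simpa using this
  have h2t' : Tendsto (fun N : ℕ => 2 + 2 / (c * N - 1)) atTop (𝓝 2) := by
    have := (tendsto_const_nhds : Tendsto (fun _ : ℕ => (2:ℝ)) atTop (𝓝 2)).add hinv1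
    simpa using this
  have hlog2t' : Tendsto (fun N : ℕ => Real.log (2 + 2 / (c * N - 1))) atTop (𝓝 (Real.log 2)) :=
    ((Real.continuousAt_log two_ne_zero).tendsto).comp h2t'
  have hden_hi : Tendsto (fun N : ℕ =>
      ρ * b ^ 2 * ((2 * (c * N) - 1) * (2 * (c * N) - 2))) atTop atTop := by
    have h0 : Tendsto (fun N : ℕ => 2 * (c * (N:ℝ))) atTop atTop :=
      ht.const_mul_atTop two_pos
    have h1 : Tendsto (fun N : ℕ => 2 * (c * (N:ℝ)) - 1) atTop atTop := by
      simpa [sub_eq_add_neg] using tendsto_atTop_add_const_right atTop (-1 : ℝ) h0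
    have h2 : Tendsto (fun N : ℕ => 2 * (c * (N:ℝ)) - 2) atTop atTop := by
      simpa [sub_eq_add_neg] using tendsto_atTop_add_const_right atTop (-2 : ℝ) h0
    exact (h1.atTop_mul_atTop₀ h2).const_mul_atTop (by positivity)
  have hzero_hi : Tendsto (fun N : ℕ =>
      1 / (ρ * b ^ 2 * ((2 * (c * N) - 1) * (2 * (c * N) - 2)))) atTop (𝓝 0) := by
    simp_rw [one_div]
    exact tendsto_inv_atTop_zero.comp hden_hi
  have hlim_hi : Tendsto (fun N : ℕ =>
      (2 * Real.log (b * (2 * (c * N))) - 2 * Real.log (b * (c * N - 1))) +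
        1 / (ρ * b ^ 2 * ((2 * (c * N) - 1) * (2 * (c * N) - 2))))
      atTop (𝓝 (2 * Real.log 2)) := by
    have hA : Tendsto (fun N : ℕ => 2 * Real.log (2 + 2 / (c * N - 1)) +
        1 / (ρ * b ^ 2 * ((2 * (c * N) - 1) * (2 * (c * N) - 2))))
        atTop (𝓝 (2 * Real.log 2)) := by
      have := (hlog2t'.const_mul 2).add hzero_hi
      simpa using this
    refine Tendsto.congr' ?_ hA
    filter_upwards [hev3] with N h3
    set t := c * (N:ℝ) with htdef
    have ht1 : (0:ℝ) < t - 1 := by linarith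
    have hfac : b * (2 * t) = (b * (t - 1)) * (2 + 2 / (t - 1)) := by field_simp; ring
    have hpos1 : (0:ℝ) < b * (t - 1) := by positivity
    have hpos2 : (0:ℝ) < 2 + 2 / (t - 1) := by positivity
    rw [hfac, Real.log_mul hpos1.ne' hpos2.ne']
    ring
  have hD : Tendsto (fun N : ℕ => L (2 * N) - L N) atTop (𝓝 (2 * Real.log 2)) :=
    tendsto_of_tendsto_of_tendsto_of_le_of_le' hlim_lo hlim_hi hsq_lo hsq_hi
  have hfin : (fun N : ℕ => C (2 * N) - C N) = fun N : ℕ => (L (2 * N) - L N) / Real.log 2 := by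
    funext N
    rw [hCL, hCL, div_sub_div_same]
  rw [hfin]
  have h2 : (2:ℝ) * Real.log 2 / Real.log 2 = 2 := by
    rw [mul_div_assoc, div_self (Real.log_pos one_lt_two).ne', mul_one]
  have := hD.div_const (Real.log 2)
  rwa [h2] at this
end
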